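/- arXiv:2209.09334 — 8 statements merged into one kernel-verified Lean document; each statement's English description precedes it below -/
import Mathlib

section
/- For every pair of positive integers a and b, the equation a·x + b·y = z² is 2-Ramsey. -/
namespace Stmt6


/-- Two-up/two-down bounded walk ("water jug") lemma. -/
lemma walk {P : ℕ → Prop} (u₁ u₂ t₁ t₂ Hi : ℕ)
    (h₁ : ∀ p, 1 ≤ p → p + u₁ ≤ Hi → P p → P (p + u₁))
    (h₂ : ∀ p, 1 ≤ p → p + u₂ ≤ Hi → P p → P (p + u₂))
    (h₃ : ∀ p, 1 ≤ p → p + t₁ ≤ Hi → P (p + t₁) → P p)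
    (h₄ : ∀ p, 1 ≤ p → p + t₂ ≤ Hi → P (p + t₂) → P p) :
    ∀ (N A₁ A₂ B₁ B₂ p n m : ℕ), A₁ + A₂ + B₁ + B₂ ≤ N →
      p + A₁ * u₁ + A₂ * u₂ = m + B₁ * t₁ + B₂ * t₂ →
      1 ≤ n → n ≤ p → p ≤ n + t₁ + t₂ + u₁ + u₂ →
      n ≤ m → m ≤ n + t₁ → m ≤ n + t₂ →
      n + t₁ + t₂ + u₁ + u₂ + u₁ + u₂ ≤ Hi →
      P p → P m := by
  intro N
  induction N with
  | zero =>
    intro A₁ A₂ B₁ B₂ p n m hN heq _ _ _ _ _ _ _ hP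
    have hA₁ : A₁ = 0 := by omega
    have hA₂ : A₂ = 0 := by omega
    have hB₁ : B₁ = 0 := by omega
    have hB₂ : B₂ = 0 := by omega
    subst hA₁; subst hA₂; subst hB₁; subst hB₂
    simp only [Nat.zero_mul, Nat.add_zero] at heq
    rwa [heq] at hP
  | succ N IH =>
    intro A₁ A₂ B₁ B₂ p n m hN heq hn1 hnp hpb hnm hmt₁ hmt₂ hwin hP
    by_cases hd₁ : 0 < B₁ ∧ n + t₁ ≤ p
    · obtain ⟨hB₁, hpt⟩ := hd₁
      obtain ⟨q, rfl⟩ : ∃ q, p = q + t₁ := ⟨p - t₁, by omega⟩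
      obtain ⟨B₁', rfl⟩ : ∃ B₁', B₁ = B₁' + 1 := ⟨B₁ - 1, by omega⟩
      have hPq : P q := h₃ q (by omega) (by omega) hP
      refine IH A₁ A₂ B₁' B₂ q n m (by omega) ?_ hn1 (by omega) (by omega) hnm hmt₁ hmt₂ hwin hPq
      have : (B₁' + 1) * t₁ = B₁' * t₁ + t₁ := by ring
      rw [this] at heq; omega
    · by_cases hd₂ : 0 < B₂ ∧ n + t₂ ≤ p
      · obtain ⟨hB₂, hpt⟩ := hd₂
        obtain ⟨q, rfl⟩ : ∃ q, p = q + t₂ := ⟨p - t₂, by omega⟩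
        obtain ⟨B₂', rfl⟩ : ∃ B₂', B₂ = B₂' + 1 := ⟨B₂ - 1, by omega⟩
        have hPq : P q := h₄ q (by omega) (by omega) hP
        refine IH A₁ A₂ B₁ B₂' q n m (by omega) ?_ hn1 (by omega) (by omega) hnm hmt₁ hmt₂ hwin hPq
        have : (B₂' + 1) * t₂ = B₂' * t₂ + t₂ := by ring
        rw [this] at heq; omega
      · have hplow : p ≤ n + t₁ + t₂ := by
          rcases Nat.eq_zero_or_pos B₁ with hB₁ | hB₁
          · rcases Nat.eq_zero_or_pos B₂ with hB₂ | hB₂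
            · have : p ≤ m := by
                subst hB₁; subst hB₂
                simp only [Nat.zero_mul, Nat.add_zero] at heq
                omega
              omega
            · have : p < n + t₂ := by
                by_contra h
                exact hd₂ ⟨hB₂, by omega⟩
              omega
          · have : p < n + t₁ := by
              by_contra h
              exact hd₁ ⟨hB₁, by omega⟩
            omega
        rcases Nat.eq_zero_or_pos A₁ with hA₁ | hA₁
        · rcases Nat.eq_zero_or_pos A₂ with hA₂ | hA₂
          · subst hA₁; subst hA₂
            simp only [Nat.zero_mul, Nat.add_zero] at heq
            have hB₁0 : B₁ = 0 := by
              by_contra h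
              have hB₁ : 0 < B₁ := Nat.pos_of_ne_zero h
              have : B₁ * t₁ ≥ 1 * t₁ := Nat.mul_le_mul_right _ hB₁
              exact hd₁ ⟨hB₁, by omega⟩
            have hB₂0 : B₂ = 0 := by
              by_contra h
              have hB₂ : 0 < B₂ := Nat.pos_of_ne_zero h
              have : B₂ * t₂ ≥ 1 * t₂ := Nat.mul_le_mul_right _ hB₂
              exact hd₂ ⟨hB₂, by omega⟩
            subst hB₁0; subst hB₂0
            simp only [Nat.zero_mul, Nat.add_zero] at heq
            rwa [heq] at hP
          · obtain ⟨A₂', rfl⟩ : ∃ A₂', A₂ = A₂' + 1 := ⟨A₂ - 1, by omega⟩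
            have hPq : P (p + u₂) := h₂ p (by omega) (by omega) hP
            refine IH A₁ A₂' B₁ B₂ (p + u₂) n m (by omega) ?_ hn1 (by omega) (by omega) hnm hmt₁ hmt₂ hwin hPq
            have : (A₂' + 1) * u₂ = A₂' * u₂ + u₂ := by ring
            rw [this] at heq; omega
        · obtain ⟨A₁', rfl⟩ : ∃ A₁', A₁ = A₁' + 1 := ⟨A₁ - 1, by omega⟩
          have hPq : P (p + u₁) := h₁ p (by omega) (by omega) hP
          refine IH A₁' A₂ B₁ B₂ (p + u₁) n m (by omega) ?_ hn1 (by omega) (by omega) hnm hmt₁ hmt₂ hwin hPq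
          have : (A₁' + 1) * u₁ = A₁' * u₁ + u₁ := by ring
          rw [this] at heq; omega

lemma bool_pair : ∀ (b₁ b₂ x : Bool), b₁ ≠ x → b₂ ≠ x → b₁ = b₂ := by decide

lemma bool_tri : ∀ (b₁ b₂ b₃ : Bool), b₁ ≠ b₂ → b₃ ≠ b₁ → b₃ ≠ b₂ → False := by decide

lemma bool_other : ∀ (b₁ b₂ b₃ : Bool), b₁ ≠ b₂ → b₃ ≠ b₁ → b₃ = b₂ := by decide

/-- The closure lemma: from the no-monochromatic-solution hypothesis `H`,
colours propagate along shifts `D` attached to a bichromatic pair `(Q*x, Q*y)`. -/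
lemma closure (α β K₀ Q : ℕ) (g : ℕ → Bool) (hβ : 0 < β) (hQβ : β ∣ Q)
    (H : ∀ k u v : ℕ, K₀ ≤ k → 1 ≤ u → 1 ≤ v → α*u + β*v = (α+β)*k^2 →
      ¬(g u = g v ∧ g u = g k))
    (x y s D : ℕ)
    (hD : (α+β)*Q^2*x^2 + α*D = (α+β)*Q^2*y^2)
    (hKx : K₀ ≤ Q*x) (hKy : K₀ ≤ Q*y)
    (hne : g (Q*x) ≠ g (Q*y))
    (hs : 1 ≤ s) (hsβ : β ∣ s) (hDβ : β ∣ D)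
    (hc1 : α*s + β ≤ (α+β)*Q^2*x^2)
    (hc2 : α*(s+D) + β ≤ (α+β)*Q^2*y^2)
    (hgs : g s = g (Q*x)) : g (s+D) = g (Q*x) := by
  by_contra hcon
  have hgsD : g (s+D) = g (Q*y) := bool_other _ _ _ hne hcon
  have hQ2β : β ∣ (α+β)*Q^2*x^2 := by
    obtain ⟨q, hq⟩ := hQβ
    exact ⟨(α+β)*(β*q^2)*x^2, by rw [hq]; ring⟩
  have hQ2βy : β ∣ (α+β)*Q^2*y^2 := by
    obtain ⟨q, hq⟩ := hQβ
    exact ⟨(α+β)*(β*q^2)*y^2, by rw [hq]; ring⟩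
  -- v₁
  obtain ⟨v₁, hv₁⟩ : β ∣ (α+β)*Q^2*x^2 - α*s :=
    Nat.dvd_sub hQ2β (hsβ.mul_left α)
  have heq1 : α*s + β*v₁ = (α+β)*Q^2*x^2 := by omega
  have hv₁pos : 1 ≤ v₁ := by
    rcases Nat.eq_zero_or_pos v₁ with h | h
    · subst h; omega
    · exact h
  have key1 : ¬(g s = g v₁ ∧ g s = g (Q*x)) := by
    refine H (Q*x) s v₁ hKx hs hv₁pos ?_
    rw [mul_pow]; linarith [heq1]
  have hv₁ne : g v₁ ≠ g (Q*x) := by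
    intro h
    exact key1 ⟨hgs.trans h.symm, hgs⟩
  -- v₂
  obtain ⟨v₂, hv₂⟩ : β ∣ (α+β)*Q^2*y^2 - α*(s+D) :=
    Nat.dvd_sub hQ2βy ((Nat.dvd_add hsβ hDβ).mul_left α)
  have heq2 : α*(s+D) + β*v₂ = (α+β)*Q^2*y^2 := by omega
  have hv₂pos : 1 ≤ v₂ := by
    rcases Nat.eq_zero_or_pos v₂ with h | h
    · subst h; omega
    · exact h
  have key2 : ¬(g (s+D) = g v₂ ∧ g (s+D) = g (Q*y)) := by
    refine H (Q*y) (s+D) v₂ hKy (by omega) hv₂pos ?_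
    rw [mul_pow]; linarith [heq2]
  have hv₂ne : g v₂ ≠ g (Q*y) := by
    intro h
    exact key2 ⟨hgsD.trans h.symm, hgsD⟩
  -- v₁ = v₂
  have hveq : v₁ = v₂ := by
    have hexp : α*(s+D) = α*s + α*D := by ring
    have h1 : β*v₁ = β*v₂ := by omega
    exact Nat.eq_of_mul_eq_mul_left hβ h1
  rw [hveq] at hv₁ne
  exact bool_tri _ _ _ hne hv₁ne hv₂ne

lemma flip'' (α β K₀ : ℕ) (g : ℕ → Bool)
    (H : ∀ k u v : ℕ, K₀ ≤ k → 1 ≤ u → 1 ≤ v → α*u + β*v = (α+β)*k^2 →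
      ¬(g u = g v ∧ g u = g k))
    (n : ℕ) (h1 : 1 ≤ n) (hK : K₀ ≤ n) : g (n^2) ≠ g n := by
  intro h
  exact H n (n^2) (n^2) hK (by nlinarith) (by nlinarith) (by ring) ⟨rfl, h⟩

/-- Case 1: a short run yields a contradiction via `G`-periodicity plus the flip. -/
lemma case1 (α β K₀ : ℕ) (g : ℕ → Bool) (hα : 0 < α) (hβ : 0 < β)
    (H : ∀ k u v : ℕ, K₀ ≤ k → 1 ≤ u → 1 ≤ v → α*u + β*v = (α+β)*k^2 →
      ¬(g u = g v ∧ g u = g k))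
    (p b : ℕ)
    (hbd : g (α*β*(α+β)*p) ≠ g (α*β*(α+β)*(p+1)))
    (hab : p+1 ≤ b)
    (hrun : ∀ j, p+1 ≤ j → j ≤ b → g (α*β*(α+β)*j) = g (α*β*(α+β)*(p+1)))
    (hb1 : g (α*β*(α+β)*(b+1)) ≠ g (α*β*(α+β)*(p+1)))
    (hshort : 100*b ≤ (p+1)^2)
    (hbig : α*β^2*(α+β)^3*(K₀+1)^2 + K₀ + 100 ≤ p) :
    False := by
  set Q := α*β*(α+β) with hQdef
  set cc := α+β with hccdef
  set G := α*β^2*(α+β)^3 with hGdef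
  have hQpos : 0 < Q := by positivity
  have hGpos : 0 < G := by positivity
  have hQβ : β ∣ Q := ⟨α*(α+β), by rw [hQdef]; ring⟩
  have hGβ : β ∣ G := ⟨α*β*(α+β)^3, by rw [hGdef]; ring⟩
  have hpb : p ≤ b := by omega
  set X := g (Q*(p+1)) with hXdef
  set k := G*(K₀+1) with hkdef
  have hk1 : 1 ≤ k := by
    have : 1*1 ≤ G*(K₀+1) := Nat.mul_le_mul hGpos (by omega)
    omega
  have hkK : K₀ ≤ k := by
    calc K₀ ≤ 1*(K₀+1) := by omega
    _ ≤ G*(K₀+1) := Nat.mul_le_mul_right _ hGpos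
  set Hi := k^2 + 20*(G*b) + 20*G with hHidef
  -- the key size estimate
  have HCAP : α*Hi + β ≤ cc*Q^2*p^2 := by
    have hkey : G*(K₀+1)^2 + 20*b + 21 ≤ p^2 := by
      set W := G*(K₀+1)^2 with hWdef
      have hp2 : (p+1)^2 = p*p + 2*p + 1 := by ring
      have hpW : W + 100 ≤ p := by omega
      have h1 : 4*p*(W+100) ≤ 4*p*p := Nat.mul_le_mul_left _ hpW
      have h2 : 4*p*(W+100) = 4*(p*W) + 400*p := by ring
      have h3 : 2*W ≤ p*W := by
        have : 2 ≤ p := by omega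
        exact Nat.mul_le_mul_right _ this
      have hsq : p^2 = p*p := sq p
      omega
    have hsplit : α*Hi + β = cc*Q^2*(G*(K₀+1)^2 + 20*b + 20) + β := by
      rw [hHidef, hkdef]
      have hαG : α*G = cc*Q^2 := by rw [hGdef, hQdef, hccdef]; ring
      calc α*((G*(K₀+1))^2 + 20*(G*b) + 20*G) + β
          = (α*G)*(G*(K₀+1)^2) + (α*G)*(20*b) + (α*G)*20 + β := by ring
      _ = cc*Q^2*(G*(K₀+1)^2) + cc*Q^2*(20*b) + cc*Q^2*20 + β := by rw [hαG]
      _ = cc*Q^2*(G*(K₀+1)^2 + 20*b + 20) + β := by ring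
    have hβcc : β ≤ cc*Q^2 := by
      calc β ≤ Q := Nat.le_of_dvd hQpos hQβ
      _ = 1*(Q*1) := by ring
      _ ≤ cc*(Q*Q) := Nat.mul_le_mul (by omega) (Nat.mul_le_mul_left _ hQpos)
      _ = cc*Q^2 := by ring
    have h5 : cc*Q^2*(G*(K₀+1)^2 + 20*b + 20) + cc*Q^2 ≤ cc*Q^2*p^2 := by
      have h6 : cc*Q^2*(G*(K₀+1)^2 + 20*b + 20) + cc*Q^2
          = cc*Q^2*(G*(K₀+1)^2 + 20*b + 21) := by ring
      rw [h6]
      exact Nat.mul_le_mul_left _ hkey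
    omega
  have capall : ∀ s, s ≤ Hi → α*s + β ≤ cc*Q^2*p^2 := by
    intro s hs
    have : α*s ≤ α*Hi := Nat.mul_le_mul_left _ hs
    omega
  have capmono : ∀ x, p ≤ x → cc*Q^2*p^2 ≤ cc*Q^2*x^2 := by
    intro x hx
    exact Nat.mul_le_mul_left _ (Nat.pow_le_pow_left hx 2)
  -- generic步 builders
  have mkup : ∀ (x y D : ℕ) (lam : Bool), cc*Q^2*x^2 + α*D = cc*Q^2*y^2 → K₀ ≤ Q*x → K₀ ≤ Q*y →
      g (Q*x) ≠ g (Q*y) → g (Q*x) = lam → p ≤ x → p ≤ y → β ∣ D →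
      ∀ pos, 1 ≤ pos → pos + D ≤ Hi → (β ∣ pos ∧ g pos = lam) → (β ∣ (pos+D) ∧ g (pos+D) = lam) := by
    intro x y D lam hD hKx hKy hne hgx hpx hpy hDβ pos hpos1 hle hP
    obtain ⟨hdvd, hg⟩ := hP
    refine ⟨Nat.dvd_add hdvd hDβ, ?_⟩
    have hclo := closure α β K₀ Q g hβ hQβ H x y pos D hD hKx hKy hne hpos1 hdvd hDβ
      (le_trans (capall pos (by omega)) (capmono x hpx))
      (le_trans (capall (pos+D) hle) (capmono y hpy))
      (by rw [hg, hgx])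
    rw [hclo, hgx]
  have mkdn : ∀ (x y D : ℕ) (lam : Bool), cc*Q^2*x^2 + α*D = cc*Q^2*y^2 → K₀ ≤ Q*x → K₀ ≤ Q*y →
      g (Q*x) ≠ g (Q*y) → g (Q*x) ≠ lam → p ≤ x → p ≤ y → β ∣ D →
      ∀ pos, 1 ≤ pos → pos + D ≤ Hi → (β ∣ (pos+D) ∧ g (pos+D) = lam) → (β ∣ pos ∧ g pos = lam) := by
    intro x y D lam hD hKx hKy hne hgxne hpx hpy hDβ pos hpos1 hle hP
    obtain ⟨hdvd, hg⟩ := hP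
    have hdvd' : β ∣ pos := by
      have := Nat.dvd_sub hdvd hDβ
      simpa using this
    refine ⟨hdvd', ?_⟩
    by_contra hno
    have hgp : g pos = g (Q*x) := bool_pair _ _ _ hno hgxne
    have hclo := closure α β K₀ Q g hβ hQβ H x y pos D hD hKx hKy hne hpos1 hdvd' hDβ
      (le_trans (capall pos (by omega)) (capmono x hpx))
      (le_trans (capall (pos+D) hle) (capmono y hpy))
      hgp
    exact hgxne (hclo.symm.trans hg)
  -- run colours and pair data
  have hXb : g (Q*b) = X := hrun b hab (le_refl b)
  have htopne : g (Q*b) ≠ g (Q*(b+1)) := by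
    rw [hXb]
    exact fun h => hb1 h.symm
  have hKQ : ∀ x, p ≤ x → K₀ ≤ Q*x := by
    intro x hx
    calc K₀ ≤ p := by omega
    _ ≤ x := hx
    _ = 1*x := by ring
    _ ≤ Q*x := Nat.mul_le_mul_right _ hQpos
  have hDbot : cc*Q^2*p^2 + α*(G*(2*p+1)) = cc*Q^2*(p+1)^2 := by
    rw [hQdef, hccdef, hGdef]; ring
  have hDtop1 : cc*Q^2*b^2 + α*(G*(2*b+1)) = cc*Q^2*(b+1)^2 := by
    rw [hQdef, hccdef, hGdef]; ring
  have hβD : ∀ c : ℕ, β ∣ G*c := fun c => Dvd.dvd.mul_right hGβ c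
  -- main periodicity step
  have const : ∀ n, 1 ≤ n → β ∣ n → n ≤ k^2 → g (n+G) = g n := by
    intro n hn1 hnβ hnk
    have e1 : G*(2*b+1) = 2*(G*b) + G := by ring
    have e2 : G*(4*b) = 4*(G*b) := by ring
    have e3 : G*(2*p+1) ≤ G*(2*b+1) := Nat.mul_le_mul_left _ (by omega)
    by_cases hbr : p+2 ≤ b
    · -- branch A : run has length ≥ 2
      obtain ⟨x₂, hx₂⟩ : ∃ x₂, x₂ + 1 = b := ⟨b-1, by omega⟩
      have hx₂p : p+1 ≤ x₂ := by omega
      have hXx₂ : g (Q*x₂) = X := hrun x₂ (by omega) (by omega)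
      have hx₂ne : g (Q*x₂) ≠ g (Q*(b+1)) := by
        rw [hXx₂]; exact fun h => hb1 h.symm
      have hDtop2 : cc*Q^2*x₂^2 + α*(G*(4*b)) = cc*Q^2*(b+1)^2 := by
        rw [hQdef, hccdef, hGdef, ← hx₂]; ring
      by_cases hgn : g n = X
      · -- X-walk: ups (b,b+1),(x₂,b+1); downs (p,p+1)
        obtain ⟨A₂, hA₂⟩ : ∃ A₂, (b+1) + A₂ = (2*p+1)*(b+2) := by
          refine ⟨(2*p+1)*(b+2) - (b+1), ?_⟩
          have : b+2 ≤ (2*p+1)*(b+2) := Nat.le_mul_of_pos_left _ (by omega)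
          omega
        have hid : (2*b+1)*((2*b+1)) + A₂*(4*b) = 1 + (4*b*(b+2))*(2*p+1) := by
          zify at hA₂ ⊢
          linear_combination (4*(b:ℤ))*hA₂
        have heqG : n + (2*b+1)*(G*(2*b+1)) + A₂*(G*(4*b))
            = (n+G) + (4*b*(b+2))*(G*(2*p+1)) + 0*(G*(2*p+1)) := by
          have h1 : (2*b+1)*(G*(2*b+1)) + A₂*(G*(4*b)) = G*((2*b+1)*(2*b+1) + A₂*(4*b)) := by ring
          have h2 : G + (4*b*(b+2))*(G*(2*p+1)) = G*(1 + (4*b*(b+2))*(2*p+1)) := by ring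
          have h3 : G*((2*b+1)*(2*b+1) + A₂*(4*b)) = G*(1 + (4*b*(b+2))*(2*p+1)) := by rw [hid]
          omega
        have hw := walk (P := fun pos => β ∣ pos ∧ g pos = X)
          (G*(2*b+1)) (G*(4*b)) (G*(2*p+1)) (G*(2*p+1)) Hi
          (fun pos h1 h2 hP => mkup b (b+1) (G*(2*b+1)) X hDtop1 (hKQ b hpb) (hKQ (b+1) (by omega)) htopne hXb hpb (by omega) (hβD _) pos h1 h2 hP)
          (fun pos h1 h2 hP => mkup x₂ (b+1) (G*(4*b)) X hDtop2 (hKQ x₂ (by omega)) (hKQ (b+1) (by omega)) hx₂ne hXx₂ (by omega) (by omega) (hβD _) pos h1 h2 hP)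
          (fun pos h1 h2 hP => mkdn p (p+1) (G*(2*p+1)) X hDbot (hKQ p (le_refl p)) (hKQ (p+1) (by omega)) hbd hbd (le_refl p) (by omega) (hβD _) pos h1 h2 hP)
          (fun pos h1 h2 hP => mkdn p (p+1) (G*(2*p+1)) X hDbot (hKQ p (le_refl p)) (hKQ (p+1) (by omega)) hbd hbd (le_refl p) (by omega) (hβD _) pos h1 h2 hP)
          ((2*b+1) + A₂ + (4*b*(b+2)) + 0) (2*b+1) A₂ (4*b*(b+2)) 0 n n (n+G)
          (le_refl _) heqG hn1 (le_refl _) (by omega) (by omega)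
          (by have : G*1 ≤ G*(2*p+1) := Nat.mul_le_mul_left _ (by omega); omega)
          (by have : G*1 ≤ G*(2*p+1) := Nat.mul_le_mul_left _ (by omega); omega)
          (by omega)
          ⟨hnβ, hgn⟩
        rw [hw.2, hgn]
      · -- lam-walk with lam = g n ≠ X: ups (p,p+1); downs (b,b+1),(x₂,b+1)
        have hbot_lam : g (Q*p) = g n := bool_pair _ _ _ hbd hgn
        have htop_nlam : g (Q*b) ≠ g n := by
          rw [hXb]; exact fun h => hgn h.symm
        have hx₂_nlam : g (Q*x₂) ≠ g n := by
          rw [hXx₂]; exact fun h => hgn h.symm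
        obtain ⟨B₁, hB₁⟩ : ∃ B₁, (2*b+1) + B₁ = (2*p+1)*(2*b+2) := by
          refine ⟨(2*p+1)*(2*b+2) - (2*b+1), ?_⟩
          have : 2*b+2 ≤ (2*p+1)*(2*b+2) := Nat.le_mul_of_pos_left _ (by omega)
          omega
        have hid : ((2*b+1)*(2*b+2))*(2*p+1) = 1 + B₁*(2*b+1) + (b+1)*(4*b) := by
          zify at hB₁ ⊢
          linear_combination (-(2*(b:ℤ)+1))*hB₁
        have heqG : n + ((2*b+1)*(2*b+2))*(G*(2*p+1)) + 0*(G*(2*p+1))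
            = (n+G) + B₁*(G*(2*b+1)) + (b+1)*(G*(4*b)) := by
          have h1 : ((2*b+1)*(2*b+2))*(G*(2*p+1)) = G*(((2*b+1)*(2*b+2))*(2*p+1)) := by ring
          have h2 : G + B₁*(G*(2*b+1)) + (b+1)*(G*(4*b)) = G*(1 + B₁*(2*b+1) + (b+1)*(4*b)) := by ring
          have h3 : G*(((2*b+1)*(2*b+2))*(2*p+1)) = G*(1 + B₁*(2*b+1) + (b+1)*(4*b)) := by rw [hid]
          omega
        have hw := walk (P := fun pos => β ∣ pos ∧ g pos = g n)
          (G*(2*p+1)) (G*(2*p+1)) (G*(2*b+1)) (G*(4*b)) Hi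
          (fun pos h1 h2 hP => mkup p (p+1) (G*(2*p+1)) (g n) hDbot (hKQ p (le_refl p)) (hKQ (p+1) (by omega)) hbd hbot_lam (le_refl p) (by omega) (hβD _) pos h1 h2 hP)
          (fun pos h1 h2 hP => mkup p (p+1) (G*(2*p+1)) (g n) hDbot (hKQ p (le_refl p)) (hKQ (p+1) (by omega)) hbd hbot_lam (le_refl p) (by omega) (hβD _) pos h1 h2 hP)
          (fun pos h1 h2 hP => mkdn b (b+1) (G*(2*b+1)) (g n) hDtop1 (hKQ b hpb) (hKQ (b+1) (by omega)) htopne htop_nlam hpb (by omega) (hβD _) pos h1 h2 hP)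
          (fun pos h1 h2 hP => mkdn x₂ (b+1) (G*(4*b)) (g n) hDtop2 (hKQ x₂ (by omega)) (hKQ (b+1) (by omega)) hx₂ne hx₂_nlam (by omega) (by omega) (hβD _) pos h1 h2 hP)
          (((2*b+1)*(2*b+2)) + 0 + B₁ + (b+1)) ((2*b+1)*(2*b+2)) 0 B₁ (b+1) n n (n+G)
          (le_refl _) heqG hn1 (le_refl _) (by omega) (by omega)
          (by have : G*1 ≤ G*(2*b+1) := Nat.mul_le_mul_left _ (by omega); omega)
          (by have : G*1 ≤ G*(4*b) := Nat.mul_le_mul_left _ (by omega); omega)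
          (by omega)
          ⟨hnβ, rfl⟩
        exact hw.2
    · -- branch B : singleton run, b = p+1
      have hbp : b = p+1 := by omega
      by_cases hgn : g n = X
      · have hid : (p+1)*(2*b+1) = 1 + (p+2)*(2*p+1) := by
          rw [hbp]; ring
        have heqG : n + (p+1)*(G*(2*b+1)) + 0*(G*(2*b+1))
            = (n+G) + (p+2)*(G*(2*p+1)) + 0*(G*(2*p+1)) := by
          have h1 : (p+1)*(G*(2*b+1)) = G*((p+1)*(2*b+1)) := by ring
          have h2 : G + (p+2)*(G*(2*p+1)) = G*(1 + (p+2)*(2*p+1)) := by ring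
          have h3 : G*((p+1)*(2*b+1)) = G*(1 + (p+2)*(2*p+1)) := by rw [hid]
          omega
        have hw := walk (P := fun pos => β ∣ pos ∧ g pos = X)
          (G*(2*b+1)) (G*(2*b+1)) (G*(2*p+1)) (G*(2*p+1)) Hi
          (fun pos h1 h2 hP => mkup b (b+1) (G*(2*b+1)) X hDtop1 (hKQ b hpb) (hKQ (b+1) (by omega)) htopne hXb hpb (by omega) (hβD _) pos h1 h2 hP)
          (fun pos h1 h2 hP => mkup b (b+1) (G*(2*b+1)) X hDtop1 (hKQ b hpb) (hKQ (b+1) (by omega)) htopne hXb hpb (by omega) (hβD _) pos h1 h2 hP)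
          (fun pos h1 h2 hP => mkdn p (p+1) (G*(2*p+1)) X hDbot (hKQ p (le_refl p)) (hKQ (p+1) (by omega)) hbd hbd (le_refl p) (by omega) (hβD _) pos h1 h2 hP)
          (fun pos h1 h2 hP => mkdn p (p+1) (G*(2*p+1)) X hDbot (hKQ p (le_refl p)) (hKQ (p+1) (by omega)) hbd hbd (le_refl p) (by omega) (hβD _) pos h1 h2 hP)
          ((p+1) + 0 + (p+2) + 0) (p+1) 0 (p+2) 0 n n (n+G)
          (le_refl _) heqG hn1 (le_refl _) (by omega) (by omega)
          (by have : G*1 ≤ G*(2*p+1) := Nat.mul_le_mul_left _ (by omega); omega)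
          (by have : G*1 ≤ G*(2*p+1) := Nat.mul_le_mul_left _ (by omega); omega)
          (by omega)
          ⟨hnβ, hgn⟩
        rw [hw.2, hgn]
      · have hbot_lam : g (Q*p) = g n := bool_pair _ _ _ hbd hgn
        have htop_nlam : g (Q*b) ≠ g n := by
          rw [hXb]; exact fun h => hgn h.symm
        have hid : (p+1)*(2*p+1) = 1 + p*(2*b+1) := by
          rw [hbp]; ring
        have heqG : n + (p+1)*(G*(2*p+1)) + 0*(G*(2*p+1))
            = (n+G) + p*(G*(2*b+1)) + 0*(G*(2*b+1)) := by
          have h1 : (p+1)*(G*(2*p+1)) = G*((p+1)*(2*p+1)) := by ring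
          have h2 : G + p*(G*(2*b+1)) = G*(1 + p*(2*b+1)) := by ring
          have h3 : G*((p+1)*(2*p+1)) = G*(1 + p*(2*b+1)) := by rw [hid]
          omega
        have hw := walk (P := fun pos => β ∣ pos ∧ g pos = g n)
          (G*(2*p+1)) (G*(2*p+1)) (G*(2*b+1)) (G*(2*b+1)) Hi
          (fun pos h1 h2 hP => mkup p (p+1) (G*(2*p+1)) (g n) hDbot (hKQ p (le_refl p)) (hKQ (p+1) (by omega)) hbd hbot_lam (le_refl p) (by omega) (hβD _) pos h1 h2 hP)
          (fun pos h1 h2 hP => mkup p (p+1) (G*(2*p+1)) (g n) hDbot (hKQ p (le_refl p)) (hKQ (p+1) (by omega)) hbd hbot_lam (le_refl p) (by omega) (hβD _) pos h1 h2 hP)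
          (fun pos h1 h2 hP => mkdn b (b+1) (G*(2*b+1)) (g n) hDtop1 (hKQ b hpb) (hKQ (b+1) (by omega)) htopne htop_nlam hpb (by omega) (hβD _) pos h1 h2 hP)
          (fun pos h1 h2 hP => mkdn b (b+1) (G*(2*b+1)) (g n) hDtop1 (hKQ b hpb) (hKQ (b+1) (by omega)) htopne htop_nlam hpb (by omega) (hβD _) pos h1 h2 hP)
          ((p+1) + 0 + p + 0) (p+1) 0 p 0 n n (n+G)
          (le_refl _) heqG hn1 (le_refl _) (by omega) (by omega)
          (by have : G*1 ≤ G*(2*b+1) := Nat.mul_le_mul_left _ (by omega); omega)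
          (by have : G*1 ≤ G*(2*b+1) := Nat.mul_le_mul_left _ (by omega); omega)
          (by omega)
          ⟨hnβ, rfl⟩
        exact hw.2
  -- chain from k to k²
  have hβk : β ∣ k := hGβ.mul_right _
  have hGk : G ∣ k := Dvd.intro _ rfl
  have chain : ∀ j, k + j*G ≤ k^2 → g (k + j*G) = g k := by
    intro j
    induction j with
    | zero => intro _; norm_num
    | succ j ih =>
      intro hle
      have hmul : (j+1)*G = j*G + G := by ring
      have hle' : k + j*G ≤ k^2 := by omega
      have h1 := const (k + j*G) (by omega) (Nat.dvd_add hβk (hGβ.mul_left j)) hle'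
      have h2 : k + (j+1)*G = k + j*G + G := by omega
      rw [h2, h1, ih hle']
  have hkk : k ≤ k^2 := by
    have h1 : k*1 ≤ k*k := Nat.mul_le_mul_left _ hk1
    have h2 : k^2 = k*k := sq k
    omega
  obtain ⟨j, hj⟩ : G ∣ k^2 - k := by
    have h1 : G ∣ k^2 := by
      have : k^2 = k*k := sq k
      rw [this]
      exact hGk.mul_right k
    exact Nat.dvd_sub h1 hGk
  have hjk : k + j*G = k^2 := by
    have h : j*G = G*j := by ring
    omega
  have hfinal := chain j (by omega)
  rw [hjk] at hfinal
  exact flip'' α β K₀ g H k hk1 hkK hfinal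




lemma aux_sq1 (r : ℕ) : (r+2)^2 ≤ 2*r^2 + 8 := by
  zify
  nlinarith [sq_nonneg ((r:ℤ) - 2)]

lemma aux_sq2 (b : ℕ) : b*b ≤ (b+1)^2 := by nlinarith

lemma flip' (α β K₀ : ℕ) (g : ℕ → Bool)
    (H : ∀ k u v : ℕ, K₀ ≤ k → 1 ≤ u → 1 ≤ v → α*u + β*v = (α+β)*k^2 →
      ¬(g u = g v ∧ g u = g k))
    (n : ℕ) (h1 : 1 ≤ n) (hK : K₀ ≤ n) : g (n^2) ≠ g n := by
  intro h
  exact H n (n^2) (n^2) hK (by nlinarith) (by nlinarith) (by ring) ⟨rfl, h⟩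

/-- Case 2: two consecutive long runs give an explicit monochromatic solution. -/
lemma case2 (α β K₀ : ℕ) (g : ℕ → Bool) (hα : 0 < α) (hβ : 0 < β)
    (H : ∀ k u v : ℕ, K₀ ≤ k → 1 ≤ u → 1 ≤ v → α*u + β*v = (α+β)*k^2 →
      ¬(g u = g v ∧ g u = g k))
    (a b b' : ℕ)
    (hrun1 : ∀ j, a ≤ j → j ≤ b → g (α*β*(α+β)*j) = g (α*β*(α+β)*a))
    (hb1ne : g (α*β*(α+β)*(b+1)) ≠ g (α*β*(α+β)*a))
    (hrun2 : ∀ j, b+1 ≤ j → j ≤ b' → g (α*β*(α+β)*j) = g (α*β*(α+β)*(b+1)))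
    (hab : a ≤ b)
    (hlong1 : a^2 + 1 ≤ 100*b)
    (hlong2 : (b+1)^2 + 1 ≤ 100*b')
    (hbig : α*β*(α+β)*(K₀ + 4*(α+β) + 2)^2 + 1000*β^2*(α*β*(α+β))
        + 100*(α+β) + α*β*(α+β) + 100 ≤ a) :
    False := by
  set Q := α*β*(α+β) with hQdef
  set cc := α+β with hccdef
  have hQpos : 0 < Q := by positivity
  have hapos : 0 < a := by omega
  have hcc : 1 ≤ cc := by omega
  have hαcc : α ≤ cc := by omega
  have hQβ : β ∣ Q := ⟨α*(α+β), by rw [hQdef]; ring⟩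
  have hbigQK : Q*(K₀ + 4*cc + 2)^2 ≤ a := by omega
  have hbigβQ : 1000*(β^2*Q) ≤ a := by
    have h : 1000*β^2*Q = 1000*(β^2*Q) := by ring
    omega
  have hbigcc : 100*cc ≤ a := by omega
  set s₂ := Nat.sqrt (b / Q) with hs₂def
  set r := Nat.sqrt (a / Q) with hrdef
  set m₀ := β*(r+2) with hm₀def
  -- div facts
  have hdb := Nat.div_add_mod b Q
  have hmb : b % Q < Q := Nat.mod_lt _ hQpos
  have hda := Nat.div_add_mod a Q
  have hma : a % Q < Q := Nat.mod_lt _ hQpos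
  -- (N1)
  have hN1 : Q*s₂^2 ≤ b := by
    have h1 : s₂^2 ≤ b/Q := Nat.sqrt_le' _
    have h2 : Q*s₂^2 ≤ Q*(b/Q) := Nat.mul_le_mul_left _ h1
    omega
  -- (N2)
  have hN2 : b+1 ≤ Q*(s₂+1)^2 := by
    have h1 : b/Q < (s₂+1)^2 := Nat.lt_succ_sqrt' _
    have h2 : Q*(b/Q+1) ≤ Q*(s₂+1)^2 := Nat.mul_le_mul_left _ (by omega)
    have h4 : Q*(b/Q+1) = Q*(b/Q) + Q := by ring
    omega
  -- (N3)
  have hN3 : a+1 ≤ Q*(r+1)^2 := by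
    have h1 : a/Q < (r+1)^2 := Nat.lt_succ_sqrt' _
    have h2 : Q*(a/Q+1) ≤ Q*(r+1)^2 := Nat.mul_le_mul_left _ (by omega)
    have h4 : Q*(a/Q+1) = Q*(a/Q) + Q := by ring
    omega
  -- (N4)
  have hN4 : Q*r^2 ≤ a := by
    have h1 : r^2 ≤ a/Q := Nat.sqrt_le' _
    have h2 : Q*r^2 ≤ Q*(a/Q) := Nat.mul_le_mul_left _ h1
    omega
  -- (N5)
  have hN5 : a+1 ≤ Q*m₀^2 := by
    have h1 : (r+1)^2 ≤ m₀^2 := by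
      have h2 : (r+1)^2 ≤ (r+2)^2 := Nat.pow_le_pow_left (by omega) 2
      have h3 : (r+2)^2 ≤ β^2*(r+2)^2 := Nat.le_mul_of_pos_left _ (by positivity)
      have h4 : β^2*(r+2)^2 = m₀^2 := by rw [hm₀def]; ring
      omega
    have h5 : Q*(r+1)^2 ≤ Q*m₀^2 := Nat.mul_le_mul_left _ h1
    omega
  -- (N6)
  have hN6 : Q*m₀^2 ≤ b := by
    have h4r : (r+2)^2 ≤ 2*r^2 + 8 := aux_sq1 r
    have hstep : Q*m₀^2 ≤ 2*(β^2*a) + 8*(β^2*Q) := by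
      have h1 : Q*m₀^2 = β^2*(Q*(r+2)^2) := by rw [hm₀def]; ring
      have h2 : Q*(r+2)^2 ≤ Q*(2*r^2+8) := Nat.mul_le_mul_left _ h4r
      have h3 : Q*(2*r^2+8) = 2*(Q*r^2) + 8*Q := by ring
      have h4 : Q*(r+2)^2 ≤ 2*a + 8*Q := by omega
      have h5 : β^2*(Q*(r+2)^2) ≤ β^2*(2*a+8*Q) := Nat.mul_le_mul_left _ h4
      have h6 : β^2*(2*a+8*Q) = 2*(β^2*a) + 8*(β^2*Q) := by ring
      omega
    have hE1 : 200*(β^2*a) + 800*(β^2*Q) ≤ a^2 := by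
      have k1 : β^2*a ≤ β^2*Q*a := by
        have h : β^2 ≤ β^2*Q := Nat.le_mul_of_pos_right _ hQpos
        exact Nat.mul_le_mul_right a h
      have k2 : β^2*Q ≤ β^2*Q*a := Nat.le_mul_of_pos_right _ hapos
      have k3 : 1000*(β^2*Q*a) ≤ a^2 := by
        have h1 : 1000*(β^2*Q*a) = (1000*(β^2*Q))*a := by ring
        have h2 : (1000*(β^2*Q))*a ≤ a*a := Nat.mul_le_mul_right a hbigβQ
        have h3 : a^2 = a*a := sq a
        omega
      have k4 : 200*(β^2*a) ≤ 200*(β^2*Q*a) := Nat.mul_le_mul_left _ k1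
      have k5 : 800*(β^2*Q) ≤ 800*(β^2*Q*a) := Nat.mul_le_mul_left _ k2
      omega
    -- 100*(Q*m₀^2) ≤ 100*(2 β²a + 8β²Q) = 200 β²a + 800 β²Q ≤ a² ≤ 100 b - 1
    have h7 : 100*(Q*m₀^2) ≤ 100*(2*(β^2*a) + 8*(β^2*Q)) := Nat.mul_le_mul_left _ hstep
    have h8 : 100*(2*(β^2*a) + 8*(β^2*Q)) = 200*(β^2*a) + 800*(β^2*Q) := by ring
    omega
  -- (N7)
  have hN7 : m₀ ≤ s₂ := by
    rw [hs₂def, Nat.le_sqrt]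
    rw [Nat.le_div_iff_mul_le hQpos]
    have h : m₀*m₀*Q = Q*m₀^2 := by ring
    omega
  -- s₂ and m₀ lower bounds
  have hs₂big : K₀ + 4*cc + 1 ≤ s₂ := by
    have h2 : Q*(K₀+4*cc+2)^2 ≤ Q*(s₂+1)^2 := by omega
    have h3 : (K₀+4*cc+2)^2 ≤ (s₂+1)^2 := Nat.le_of_mul_le_mul_left h2 hQpos
    by_contra hcon
    push_neg at hcon
    have : (s₂+1)^2 < (K₀+4*cc+2)^2 := Nat.pow_lt_pow_left (by omega) (by omega)
    omega
  have hm₀big : K₀ + 1 ≤ m₀ := by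
    have h2 : Q*(K₀+4*cc+2)^2 ≤ Q*m₀^2 := by omega
    have h3 : (K₀+4*cc+2)^2 ≤ m₀^2 := Nat.le_of_mul_le_mul_left h2 hQpos
    by_contra hcon
    push_neg at hcon
    have : m₀^2 < (K₀+4*cc+2)^2 := Nat.pow_lt_pow_left (by omega) (by omega)
    omega
  -- (N8) : the value v
  have hccQs : cc*s₂ ≤ cc*Q*s₂ := by
    have h1 : cc*s₂ = cc*1*s₂ := by ring
    have h2 : cc*1*s₂ ≤ cc*Q*s₂ :=
      Nat.mul_le_mul_right _ (Nat.mul_le_mul_left _ hQpos)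
    omega
  have hαm₀cc : α*m₀ ≤ cc*Q*s₂ := by
    have h1 : α*m₀ ≤ cc*m₀ := Nat.mul_le_mul_right _ hαcc
    have h2 : cc*m₀ ≤ cc*s₂ := Nat.mul_le_mul_left _ hN7
    omega
  have hQs2s : 3*(cc*Q*s₂) + cc*Q ≤ Q*s₂^2 := by
    have hs₂b : 4*cc+1 ≤ s₂ := by omega
    have h5 : Q*((4*cc+1)*s₂) ≤ Q*(s₂*s₂) := by
      apply Nat.mul_le_mul_left
      exact Nat.mul_le_mul_right _ hs₂b
    have h6 : Q*((4*cc+1)*s₂) = 3*(cc*Q*s₂) + cc*(Q*s₂) + Q*s₂ := by ring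
    have h7 : Q*1 ≤ Q*s₂ := Nat.mul_le_mul_left _ (by omega)
    have h8 : cc*(Q*1) ≤ cc*(Q*s₂) := Nat.mul_le_mul_left _ h7
    have h9 : cc*(Q*1) = cc*Q := by ring
    have h10 : Q*(s₂*s₂) = Q*s₂^2 := by ring
    omega
  have hαm₀ : α*m₀ + β ≤ cc*Q*s₂^2 := by
    have h1 : Q*s₂^2 ≤ cc*(Q*s₂^2) := Nat.le_mul_of_pos_left _ (by omega)
    have h2 : cc*(Q*s₂^2) = cc*Q*s₂^2 := by ring
    have h3 : β ≤ cc*Q := by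
      calc β ≤ cc := by omega
      _ ≤ cc*Q := Nat.le_mul_of_pos_right _ hQpos
    omega
  have hdvd : β ∣ cc*Q*s₂^2 - α*m₀ := by
    apply Nat.dvd_sub
    · obtain ⟨q, hq⟩ := hQβ
      exact ⟨cc*q*s₂^2, by rw [hq]; ring⟩
    · exact Dvd.dvd.mul_left ⟨r+2, rfl⟩ α
  obtain ⟨v, hv⟩ := hdvd
  have heqv : α*m₀ + β*v = cc*Q*s₂^2 := by omega
  -- (N9)
  have hN9 : b+1 ≤ v := by
    have h9 : α*m₀ + cc*Q*(2*s₂+1) ≤ α*(b+1) := by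
      have h2 : cc*Q*(2*s₂+1) = 2*(cc*Q*s₂) + cc*Q := by ring
      have h5 : Q*s₂^2 ≤ b := hN1
      have h6 : b ≤ α*(b+1) := by
        calc b ≤ 1*(b+1) := by omega
        _ ≤ α*(b+1) := Nat.mul_le_mul_right _ hα
      omega
    have hA : cc*(b+1) ≤ cc*(Q*(s₂+1)^2) := Nat.mul_le_mul_left _ hN2
    have hB : cc*(Q*(s₂+1)^2) = cc*Q*s₂^2 + cc*Q*(2*s₂+1) := by ring
    have hC : cc*(b+1) = α*(b+1) + β*(b+1) := by rw [hccdef]; ring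
    have hD : β*(b+1) ≤ β*v := by omega
    exact Nat.le_of_mul_le_mul_left hD hβ
  -- (N10)
  have hN10 : v ≤ b' := by
    have h1 : β*v ≤ cc*b := by
      have h0 : cc*(Q*s₂^2) ≤ cc*b := Nat.mul_le_mul_left _ hN1
      have h2 : cc*Q*s₂^2 = cc*(Q*s₂^2) := by ring
      omega
    have hb100 : 100*cc ≤ b := by omega
    have h3 : (100*cc)*b ≤ b*b := Nat.mul_le_mul_right _ hb100
    have h4 : b*b ≤ (b+1)^2 := aux_sq2 b
    have h5 : (100*cc)*b = 100*(cc*b) := by ring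
    have h6 : cc*b ≤ b' := by omega
    have h7 : β*v ≤ β*b' := by
      have h8 : b' ≤ β*b' := Nat.le_mul_of_pos_left _ hβ
      omega
    exact Nat.le_of_mul_le_mul_left h7 hβ
  -- colors
  have hQm₀K : K₀ ≤ Q*m₀ ∧ 1 ≤ Q*m₀ := by
    constructor
    · calc K₀ ≤ 1*m₀ := by omega
      _ ≤ Q*m₀ := Nat.mul_le_mul_right _ hQpos
    · have : 1*1 ≤ Q*m₀ := Nat.mul_le_mul hQpos (by omega)
      omega
  have hQs₂K : K₀ ≤ Q*s₂ ∧ 1 ≤ Q*s₂ := by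
    constructor
    · calc K₀ ≤ 1*s₂ := by omega
      _ ≤ Q*s₂ := Nat.mul_le_mul_right _ hQpos
    · have : 1*1 ≤ Q*s₂ := Nat.mul_le_mul hQpos (by omega)
      omega
  have hflipm : g (Q*m₀) ≠ g (Q*a) := by
    have h2 := flip' α β K₀ g H (Q*m₀) hQm₀K.2 hQm₀K.1
    have h3 : (Q*m₀)^2 = Q*(Q*m₀^2) := by ring
    have h4 : g (Q*(Q*m₀^2)) = g (Q*a) := hrun1 (Q*m₀^2) (by omega) hN6
    rw [h3, h4] at h2
    exact fun h => h2 (h.symm)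
  have hs₂sq : a ≤ Q*s₂^2 := by
    have h1 : m₀^2 ≤ s₂^2 := Nat.pow_le_pow_left hN7 2
    have h2 : Q*m₀^2 ≤ Q*s₂^2 := Nat.mul_le_mul_left _ h1
    omega
  have hflips₂ : g (Q*s₂) ≠ g (Q*a) := by
    have h2 := flip' α β K₀ g H (Q*s₂) hQs₂K.2 hQs₂K.1
    have h3 : (Q*s₂)^2 = Q*(Q*s₂^2) := by ring
    have h4 : g (Q*(Q*s₂^2)) = g (Q*a) := hrun1 (Q*s₂^2) hs₂sq hN1
    rw [h3, h4] at h2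
    exact fun h => h2 (h.symm)
  have hvcol : g (Q*v) ≠ g (Q*a) := by
    have h1 : g (Q*v) = g (Q*(b+1)) := hrun2 v hN9 hN10
    rw [h1]
    exact hb1ne
  -- apply H
  have hmono₁ : g (Q*m₀) = g (Q*v) := bool_pair _ _ _ hflipm hvcol
  have hmono₂ : g (Q*m₀) = g (Q*s₂) := bool_pair _ _ _ hflipm hflips₂
  refine H (Q*s₂) (Q*m₀) (Q*v) hQs₂K.1 hQm₀K.2 ?_ ?_ ⟨hmono₁, hmono₂⟩
  · have h1 : 1*1 ≤ Q*v := Nat.mul_le_mul hQpos (by omega)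
    omega
  · calc α*(Q*m₀) + β*(Q*v) = Q*(α*m₀ + β*v) := by ring
    _ = Q*(cc*Q*s₂^2) := by rw [heqv]
    _ = cc*(Q*s₂)^2 := by ring




/-- Flip: `g (n^2) ≠ g n` for large `n`. -/
lemma flip (α β K₀ : ℕ) (g : ℕ → Bool)
    (H : ∀ k u v : ℕ, K₀ ≤ k → 1 ≤ u → 1 ≤ v → α*u + β*v = (α+β)*k^2 →
      ¬(g u = g v ∧ g u = g k))
    (n : ℕ) (h1 : 1 ≤ n) (hK : K₀ ≤ n) : g (n^2) ≠ g n := by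
  intro h
  exact H n (n^2) (n^2) hK (by nlinarith) (by nlinarith) (by ring) ⟨rfl, h⟩

/-- There are colour changes on the `Q`-grid beyond every point. -/
lemma infBoundary (α β K₀ Q : ℕ) (g : ℕ → Bool) (hQ : 1 ≤ Q)
    (H : ∀ k u v : ℕ, K₀ ≤ k → 1 ≤ u → 1 ≤ v → α*u + β*v = (α+β)*k^2 →
      ¬(g u = g v ∧ g u = g k)) :
    ∀ N, ∃ p, N ≤ p ∧ g (Q*p) ≠ g (Q*(p+1)) := by
  intro N
  by_contra hcon
  push_neg at hcon
  have hconst : ∀ j, g (Q*(N+K₀+1)) = g (Q*(N+K₀+1+j)) := by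
    intro j
    induction j with
    | zero => rfl
    | succ j ih =>
      rw [ih, show N+K₀+1+(j+1) = (N+K₀+1+j)+1 by ring]
      exact hcon (N+K₀+1+j) (by omega)
  set n₀ := Q*(N+K₀+1) with hn₀
  have h1 : 1 ≤ n₀ := by have := Nat.mul_le_mul hQ (show 1 ≤ N+K₀+1 by omega); simpa using this
  have hKn : K₀ ≤ n₀ := by
    calc K₀ ≤ 1*(N+K₀+1) := by omega
    _ ≤ Q*(N+K₀+1) := Nat.mul_le_mul_right _ hQ
  have hflip := flip α β K₀ g H n₀ h1 hKn
  apply hflip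
  have hsq : n₀^2 = Q*(N+K₀+1+(Q*(N+K₀+1)^2 - (N+K₀+1))) := by
    have hle : N+K₀+1 ≤ Q*(N+K₀+1)^2 := by
      calc N+K₀+1 ≤ 1*(N+K₀+1)^2 := by nlinarith
      _ ≤ Q*(N+K₀+1)^2 := Nat.mul_le_mul_right _ hQ
    have : N+K₀+1+(Q*(N+K₀+1)^2 - (N+K₀+1)) = Q*(N+K₀+1)^2 := by omega
    rw [this, hn₀]; ring
  rw [hsq]
  exact (hconst _).symm

/-- Construction of the (maximal to the right) monochromatic run starting at `p+1`. -/
lemma mkrun (Q : ℕ) (g : ℕ → Bool)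
    (hINF : ∀ N, ∃ p, N ≤ p ∧ g (Q*p) ≠ g (Q*(p+1))) (p : ℕ) :
    ∃ b, p+1 ≤ b ∧ (∀ j, p+1 ≤ j → j ≤ b → g (Q*j) = g (Q*(p+1))) ∧
      g (Q*(b+1)) ≠ g (Q*(p+1)) := by
  have hex : ∃ i, g (Q*(p+1+i)) ≠ g (Q*(p+1)) := by
    obtain ⟨q, hq, hqne⟩ := hINF (p+1)
    by_cases hgq : g (Q*q) = g (Q*(p+1))
    · refine ⟨q+1-(p+1), ?_⟩
      rw [show p+1+(q+1-(p+1)) = q+1 by omega]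
      rw [← hgq]
      exact fun h => hqne h.symm
    · exact ⟨q-(p+1), by rw [show p+1+(q-(p+1)) = q by omega]; exact hgq⟩
  set i₀ := Nat.find hex with hi₀
  have hfind : g (Q*(p+1+i₀)) ≠ g (Q*(p+1)) := Nat.find_spec hex
  have hmin : ∀ i, i < i₀ → g (Q*(p+1+i)) = g (Q*(p+1)) := by
    intro i hi
    have := Nat.find_min hex hi
    simpa using this
  have hi₀pos : 1 ≤ i₀ := by
    rcases Nat.eq_zero_or_pos i₀ with h | h
    · exfalso; apply hfind; rw [h]
    · exact h
  refine ⟨p + i₀, by omega, ?_, ?_⟩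
  · intro j hj1 hj2
    have : j = p+1+(j-(p+1)) := by omega
    rw [this]
    exact hmin _ (by omega)
  · rw [show p+i₀+1 = p+1+i₀ by ring]
    exact hfind


/-- The master combinatorial lemma. -/
lemma master (α β : ℕ) (hα : 0 < α) (hβ : 0 < β) (K₀ : ℕ) (g : ℕ → Bool) :
    ∃ k u v : ℕ, K₀ ≤ k ∧ 1 ≤ u ∧ 1 ≤ v ∧ α*u + β*v = (α+β)*k^2 ∧
      g u = g v ∧ g u = g k := by
  by_contra hcon
  have H : ∀ k u v : ℕ, K₀ ≤ k → 1 ≤ u → 1 ≤ v → α*u + β*v = (α+β)*k^2 →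
      ¬(g u = g v ∧ g u = g k) := by
    intro k u v h1 h2 h3 h4 h5
    exact hcon ⟨k, u, v, h1, h2, h3, h4, h5.1, h5.2⟩
  have hQpos : 0 < α*β*(α+β) := by positivity
  have hINF := infBoundary α β K₀ (α*β*(α+β)) g hQpos H
  by_cases hcase : ∀ N, ∃ p b : ℕ, N ≤ p ∧
      g (α*β*(α+β)*p) ≠ g (α*β*(α+β)*(p+1)) ∧ p+1 ≤ b ∧
      (∀ j, p+1 ≤ j → j ≤ b → g (α*β*(α+β)*j) = g (α*β*(α+β)*(p+1))) ∧
      g (α*β*(α+β)*(b+1)) ≠ g (α*β*(α+β)*(p+1)) ∧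
      100*b ≤ (p+1)^2
  · obtain ⟨p, b, hp, hbd, hab, hrun, hb1, hshort⟩ :=
      hcase (α*β^2*(α+β)^3*(K₀+1)^2 + K₀ + 100)
    exact case1 α β K₀ g hα hβ H p b hbd hab hrun hb1 hshort hp
  · push_neg at hcase
    obtain ⟨N, hN⟩ := hcase
    set T₂ := α*β*(α+β)*(K₀ + 4*(α+β) + 2)^2 + 1000*β^2*(α*β*(α+β))
        + 100*(α+β) + α*β*(α+β) + 100 with hT₂def
    obtain ⟨p₀, hp₀, hbd₀⟩ := hINF (N + T₂)
    obtain ⟨b₁, hab₁, hrun₁, hb1₁⟩ := mkrun (α*β*(α+β)) g hINF p₀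
    have hlong1 : (p₀+1)^2 < 100*b₁ :=
      hN p₀ b₁ (by omega) hbd₀ hab₁ hrun₁ hb1₁
    have hbd₁ : g (α*β*(α+β)*b₁) ≠ g (α*β*(α+β)*(b₁+1)) := by
      have h1 : g (α*β*(α+β)*b₁) = g (α*β*(α+β)*(p₀+1)) := hrun₁ b₁ hab₁ (le_refl _)
      rw [h1]
      exact fun h => hb1₁ h.symm
    obtain ⟨b₂, hab₂, hrun₂, hb2₂⟩ := mkrun (α*β*(α+β)) g hINF b₁
    have hlong2 : (b₁+1)^2 < 100*b₂ :=
      hN b₁ b₂ (by omega) hbd₁ hab₂ hrun₂ hb2₂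
    exact case2 α β K₀ g hα hβ H (p₀+1) b₁ b₂
      (fun j h1 h2 => hrun₁ j h1 h2) hb1₁ (fun j h1 h2 => hrun₂ j h1 h2)
      hab₁ (by omega) (by omega) (by omega)

lemma fin2_eq_of_decide : ∀ i j : Fin 2, decide (i = 0) = decide (j = 0) → i = j := by decide

end Stmt6

/-- For every pair of positive integers `a` and `b`, the equation
`a·x + b·y = z²` is 2-Ramsey. -/
theorem stmt_6 (a b : ℕ) (ha : 0 < a) (hb : 0 < b) :
    ∀ φ : ℕ → Fin 2,
      {w : ℕ × ℕ × ℕ | 0 < w.1 ∧ 0 < w.2.1 ∧ 0 < w.2.2 ∧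
        φ w.1 = φ w.2.1 ∧ φ w.1 = φ w.2.2 ∧
        a * w.1 + b * w.2.1 = w.2.2 ^ 2}.Infinite := by
  intro φ
  set S := {w : ℕ × ℕ × ℕ | 0 < w.1 ∧ 0 < w.2.1 ∧ 0 < w.2.2 ∧
        φ w.1 = φ w.2.1 ∧ φ w.1 = φ w.2.2 ∧
        a * w.1 + b * w.2.1 = w.2.2 ^ 2} with hSdef
  have key : ∀ N : ℕ, ∃ w ∈ S, N < w.2.2 := by
    intro N
    obtain ⟨k, u, v, hk, hu, hv, heq, hg1, hg2⟩ :=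
      Stmt6.master a b ha hb (N+1) (fun n => decide (φ ((a+b)*n) = 0))
    refine ⟨((a+b)*u, (a+b)*v, (a+b)*k), ?_, ?_⟩
    · rw [hSdef]
      refine ⟨?_, ?_, ?_, ?_, ?_, ?_⟩
      · have : 1*1 ≤ (a+b)*u := Nat.mul_le_mul (by omega) hu
        simpa using by omega
      · have : 1*1 ≤ (a+b)*v := Nat.mul_le_mul (by omega) hv
        simpa using by omega
      · have : 1*1 ≤ (a+b)*k := Nat.mul_le_mul (by omega) (by omega)
        simpa using by omega
      · exact Stmt6.fin2_eq_of_decide _ _ hg1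
      · exact Stmt6.fin2_eq_of_decide _ _ hg2
      · show a * ((a+b)*u) + b * ((a+b)*v) = ((a+b)*k)^2
        have h1 : a * ((a+b)*u) + b * ((a+b)*v) = (a+b)*(a*u + b*v) := by ring
        rw [h1, heq]
        ring
    · show N < (a+b)*k
      calc N < N+1 := by omega
      _ ≤ k := hk
      _ = 1*k := by ring
      _ ≤ (a+b)*k := Nat.mul_le_mul_right _ (by omega)
  by_contra hfin
  rw [Set.not_infinite] at hfin
  have himg : ((fun w : ℕ × ℕ × ℕ => w.2.2) '' S).Finite := hfin.image _
  obtain ⟨M, hM⟩ := himg.bddAbove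
  obtain ⟨w, hw, hNw⟩ := key M
  have hle : w.2.2 ≤ M := hM ⟨w, hw, rfl⟩
  omega
end

section
/- Let p ∈ ℤ[z] be a polynomial of degree at least 2 with positive leading coefficient, and let a, b be positive integers with gcd(a,b) = 1. Let d ≥ 1 be an integer and t an integer such that (a+b)·t ≡ p(t) (mod d). Then for every positive integer K there exist positive integers x, y, z with a·x + b·y = p(z), x, y, z ≥ K, and x ≡ y ≡ z ≡ t (mod d). -/
open Filter Polynomial

lemma growth (p : Polynomial ℤ) (hdeg : 2 ≤ p.natDegree) (hlead : 0 < p.leadingCoeff) :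
    Filter.Tendsto (fun z : ℤ => p.eval z) atTop atTop := by
  have hinj : Function.Injective (Int.castRingHom ℚ) := Int.cast_injective
  set q : Polynomial ℚ := p.map (Int.castRingHom ℚ) with hq
  have hdq : 0 < q.degree := by
    rw [Polynomial.natDegree_pos_iff_degree_pos.symm, Polynomial.natDegree_map_eq_of_injective hinj]
    omega
  have hlq : 0 ≤ q.leadingCoeff := by
    rw [Polynomial.leadingCoeff_map_of_injective hinj]
    simp only [Int.coe_castRingHom]; exact_mod_cast hlead.le
  have h1 : Tendsto (fun x : ℚ => q.eval x) atTop atTop :=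
    q.tendsto_atTop_of_leadingCoeff_nonneg hdq hlq
  have h2 : Tendsto (fun n : ℤ => ((p.eval n : ℤ) : ℚ)) atTop atTop := by
    have := h1.comp (tendsto_intCast_atTop_atTop (R := ℚ))
    convert this using 2 with n
    simp [hq, Function.comp, Polynomial.eval_map, Polynomial.eval₂_hom]
  rw [tendsto_intCast_atTop_iff] at h2
  exact h2



/-- **Lemma: large solutions in a residue class.** Let `p ∈ ℤ[z]` have degree at
least 2 and positive leading coefficient, and let `a, b` be positive coprime integers. Let
`d ≥ 1` and `t` be integers with `(a+b)·t ≡ p(t) (mod d)`. Then for every positive integer `K`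
there exist positive integers `x, y, z ≥ K`, all congruent to `t` mod `d`, with
`a·x + b·y = p(z)`. -/
theorem stmt_7 (p : Polynomial ℤ) (hdeg : 2 ≤ p.natDegree) (hlead : 0 < p.leadingCoeff)
    (a b : ℤ) (ha : 0 < a) (hb : 0 < b) (hab : IsCoprime a b)
    (d : ℤ) (hd : 1 ≤ d) (t : ℤ) (ht : d ∣ p.eval t - (a + b) * t) :
    ∀ K : ℤ, 0 < K → ∃ x y z : ℤ, 0 < x ∧ 0 < y ∧ 0 < z ∧ K ≤ x ∧ K ≤ y ∧ K ≤ z ∧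
      a * x + b * y = p.eval z ∧ d ∣ x - t ∧ d ∣ y - t ∧ d ∣ z - t := by
  intro K hK
  obtain ⟨u0, v0, huv⟩ := hab
  -- abs facts
  obtain ⟨A, hA0, hA1, hA2⟩ : ∃ A : ℤ, 0 ≤ A ∧ t ≤ A ∧ -t ≤ A :=
    ⟨|t|, abs_nonneg t, le_abs_self t, neg_le_abs t⟩
  set L : ℤ := K + A with hL
  set C : ℤ := a * (L + b) + b * L with hC
  obtain ⟨z0, hz0⟩ := (Filter.eventually_atTop).mp
    ((growth p hdeg hlead).eventually_ge_atTop (d * C + (a + b) * t))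
  set m : ℤ := max (max (z0 - t) (K - t)) 0 with hm
  have hmnn : 0 ≤ m := le_max_right _ _
  have hdm : m ≤ d * m := le_mul_of_one_le_left hmnn hd
  set z : ℤ := t + d * m with hz
  have hzK : K ≤ z := by
    have : K - t ≤ m := le_trans (le_max_right _ _) (le_max_left _ _)
    simp only [hz]; linarith
  have hzz0 : z0 ≤ z := by
    have : z0 - t ≤ m := le_trans (le_max_left _ _) (le_max_left _ _)
    simp only [hz]; linarith
  have hN : d * C + (a + b) * t ≤ p.eval z := hz0 z hzz0
  have hdiv1 : d ∣ p.eval z - p.eval t := by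
    have h := Polynomial.sub_dvd_eval_sub z t p
    have hzt : z - t = d * m := by simp [hz]
    rw [hzt] at h
    exact (dvd_mul_right d m).trans h
  have hdiv : d ∣ p.eval z - (a + b) * t := by
    have := dvd_add hdiv1 ht
    simpa using this
  set M : ℤ := (p.eval z - (a + b) * t) / d with hM
  have hdM : d * M = p.eval z - (a + b) * t := Int.mul_ediv_cancel' hdiv
  have hdpos : (0:ℤ) < d := by omega
  have hMC : C ≤ M := by
    have h1 : d * C ≤ d * M := by linarith
    exact le_of_mul_le_mul_left h1 hdpos
  set q : ℤ := (M * u0 - L) / b with hq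
  set u : ℤ := M * u0 - b * q with hu
  set v : ℤ := M * v0 + a * q with hv
  have hub : u - L = (M * u0 - L) % b := by
    have h := Int.emod_add_mul_ediv (M * u0 - L) b
    simp only [hu, hq]; linarith
  have hr1 : 0 ≤ (M * u0 - L) % b := Int.emod_nonneg _ (by omega)
  have hr2 : (M * u0 - L) % b < b := Int.emod_lt_of_pos _ hb
  have huL : L ≤ u := by linarith
  have huU : u ≤ L + b - 1 := by linarith
  have hsum : a * u + b * v = M := by
    simp only [hu, hv]; linear_combination M * huv
  have hzeq : z = t + d * m := hz
  clear_value M u v z m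
  clear hub hr1 hr2 hq hu hv hz hm hz0 hM
  have key : b * L + a ≤ b * v := by
    nlinarith [mul_le_mul_of_nonneg_left huU ha.le]
  have hvL : L ≤ v := by
    by_contra h
    push_neg at h
    have := mul_le_mul_of_nonneg_left (show v ≤ L - 1 by omega) hb.le
    nlinarith
  have hdu : u ≤ d * u := le_mul_of_one_le_left (by linarith) hd
  have hdv : v ≤ d * v := le_mul_of_one_le_left (by linarith) hd
  refine ⟨t + d * u, t + d * v, z, by linarith, by linarith, by linarith, by linarith,
    by linarith, hzK, ?_, ⟨u, by ring⟩, ⟨v, by ring⟩, ⟨m, by linarith [hzeq]⟩⟩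
  linear_combination hdM + hsum * d
end

section
/- Let p ∈ ℤ[z] be a polynomial of degree at least 1 with positive leading coefficient, let d be a positive integer, let t be an integer, and let δ > 0 be a real number. Then for all sufficiently large real x there exists an integer z with z ≡ t (mod d) such that x ≤ p(z) ≤ (1+δ)·x. -/
open Polynomial Filter Asymptotics

/-- **Lemma: polynomial values in a linear gap.** Let `p ∈ ℤ[z]` have degree at
least 1 and positive leading coefficient, let `d` be a positive integer, `t` an integer and
`δ > 0` a real number. Then for all sufficiently large real `x` there exists an integer `z` with
`z ≡ t (mod d)` such that `x ≤ p(z) ≤ (1+δ)·x`. -/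
theorem stmt_8 (p : Polynomial ℤ) (hdeg : 1 ≤ p.natDegree) (hlead : 0 < p.leadingCoeff)
    (d : ℕ) (hd : 0 < d) (t : ℤ) (δ : ℝ) (hδ : 0 < δ) :
    ∃ X : ℝ, ∀ x : ℝ, X ≤ x → ∃ z : ℤ, (d : ℤ) ∣ z - t ∧
      x ≤ ((p.eval z : ℤ) : ℝ) ∧ ((p.eval z : ℤ) : ℝ) ≤ (1 + δ) * x := by
  classical
  set P : ℝ[X] := p.map (Int.castRingHom ℝ) with hP
  have hdR : (d : ℝ) ≠ 0 := by positivity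
  set r : ℝ[X] := C (d : ℝ) * X + C (t : ℝ) with hr
  have hrdeg : r.natDegree = 1 := natDegree_linear hdR
  have hrlead : r.leadingCoeff = (d : ℝ) := leadingCoeff_linear hdR
  have hPdeg : P.natDegree = p.natDegree :=
    p.natDegree_map_eq_of_injective (Int.cast_injective)
  have hPlead : P.leadingCoeff = (p.leadingCoeff : ℝ) := by
    rw [hP, leadingCoeff, leadingCoeff, natDegree_map_eq_of_injective Int.cast_injective,
      coeff_map]; rfl
  set q : ℝ[X] := P.comp r with hq
  have hqdeg : q.natDegree = p.natDegree := by
    rw [hq, natDegree_comp, hrdeg, hPdeg, mul_one]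
  have hqlead : 0 < q.leadingCoeff := by
    rw [hq, leadingCoeff_comp (by rw [hrdeg]; norm_num), hPlead, hrlead]
    have : (0:ℝ) < (p.leadingCoeff : ℝ) := by exact_mod_cast hlead
    positivity
  have hqdegpos : 0 < q.degree := by
    rw [← natDegree_pos_iff_degree_pos, hqdeg]; omega
  -- q tends to atTop
  have hqtop : Tendsto (fun x : ℝ => q.eval x) atTop atTop :=
    q.tendsto_atTop_of_leadingCoeff_nonneg hqdegpos hqlead.le
  -- shifted polynomial
  set q1 : ℝ[X] := q.comp (X + C 1) with hq1
  have hq1deg : q1.natDegree = q.natDegree := by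
    rw [hq1, natDegree_comp, natDegree_X_add_C, mul_one]
  have hq1lead : q1.leadingCoeff = q.leadingCoeff := by
    rw [hq1, leadingCoeff_comp (by rw [natDegree_X_add_C]; norm_num),
      leadingCoeff_X_add_C, one_pow, mul_one]
  have hequiv : (fun x : ℝ => q1.eval x) ~[atTop] fun x => q.eval x := by
    have h1 := q1.isEquivalent_atTop_lead
    have h2 := q.isEquivalent_atTop_lead
    rw [hq1deg, hq1lead] at h1
    exact h1.trans h2.symm
  have hqne : ∀ᶠ x : ℝ in atTop, q.eval x ≠ 0 :=
    (hqtop.eventually_gt_atTop 0).mono fun x hx => ne_of_gt hx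
  have hratio : Tendsto (fun x : ℝ => q1.eval x / q.eval x) atTop (nhds 1) :=
    (isEquivalent_iff_tendsto_one hqne).mp hequiv
  -- eventual bound on ℝ
  have hev : ∀ᶠ x : ℝ in atTop, 0 < q.eval x ∧ q.eval (x + 1) ≤ (1 + δ) * q.eval x := by
    have h1 : ∀ᶠ x : ℝ in atTop, q1.eval x / q.eval x < 1 + δ :=
      hratio.eventually_lt_const (by linarith)
    filter_upwards [h1, hqtop.eventually_gt_atTop 0] with x hx hpos
    refine ⟨hpos, ?_⟩
    have : q1.eval x = q.eval (x + 1) := by rw [hq1, eval_comp]; simp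
    rw [this] at hx
    have := (div_lt_iff₀ hpos).mp hx
    linarith
  -- define g on ℕ
  set g : ℕ → ℝ := fun n => ((p.eval (t + d * n) : ℤ) : ℝ) with hg
  have hgq : ∀ n : ℕ, g n = q.eval (n : ℝ) := by
    intro n
    rw [hq, eval_comp, hr]
    simp only [eval_add, eval_mul, eval_C, eval_X, hP, hg]
    rw [show (d:ℝ) * (n:ℝ) + (t:ℝ) = ((t + d * n : ℤ) : ℝ) by push_cast; ring]
    rw [eval_intCast_map]
    rfl
  have hgtop : Tendsto g atTop atTop := by
    have := hqtop.comp (tendsto_natCast_atTop_atTop (R := ℝ))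
    refine this.congr fun n => (hgq n).symm
  have hevN : ∀ᶠ n : ℕ in atTop, 0 < g n ∧ g (n + 1) ≤ (1 + δ) * g n := by
    have := (tendsto_natCast_atTop_atTop (R := ℝ)).eventually hev
    filter_upwards [this] with n hn
    rw [hgq n, hgq (n + 1)]
    push_cast
    push_cast at hn
    exact hn
  obtain ⟨N, hN⟩ := eventually_atTop.mp hevN
  set M : ℝ := (Finset.range (N + 1)).sup' (by simp) g with hM
  refine ⟨M + 1, fun x hx => ?_⟩
  have hsmall : ∀ n ≤ N, g n < x := by
    intro n hn
    have : g n ≤ M := Finset.le_sup' g (Finset.mem_range.mpr (by omega))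
    linarith
  have hex : ∃ n, x ≤ g n := (hgtop.eventually_ge_atTop x).exists
  have hn₀spec : x ≤ g (Nat.find hex) := Nat.find_spec hex
  have hn₀gt : N < Nat.find hex := by
    by_contra h
    exact absurd hn₀spec (not_le.mpr (hsmall _ (by omega)))
  obtain ⟨m, hmeq⟩ : ∃ m, Nat.find hex = m + 1 := ⟨Nat.find hex - 1, by omega⟩
  rw [hmeq] at hn₀spec
  have hmlt : g m < x := not_le.mp (Nat.find_min hex (by omega))
  have hm := hN m (by omega)
  refine ⟨t + d * (m + 1), ⟨m + 1, by push_cast; ring⟩, ?_, ?_⟩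
  · exact_mod_cast hn₀spec
  · have : g (m + 1) ≤ (1 + δ) * g m := hm.2
    have hx' : (1 + δ) * g m ≤ (1 + δ) * x := by nlinarith
    calc ((p.eval (t + d * (m+1)) : ℤ) : ℝ) = g (m+1) := by push_cast [hg]; ring_nf
      _ ≤ (1 + δ) * x := le_trans this hx'
end

section
/- Let u, m', a₁, a₂ be positive integers and C, v integers such that gcd(u, m') = gcd(a₁, m') = gcd(a₂, m') = 1 and (a₁ + a₂)·v ≡ C (mod u). Set m = u·m', and let S denote the set of residue classes γ in ℤ/mℤ with γ ≡ v (mod u). Then for every γ₁ ∈ S there exists a unique γ₂ ∈ S such that a₁·γ₁ + a₂·γ₂ ≡ C (mod m), and the map S → S sending γ₁ to this γ₂ is a bijection. -/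
/-- **Residue-class bijection lemma.** Let `u, m', a₁, a₂` be positive integers
and `C, v` integers with `gcd(u,m') = gcd(a₁,m') = gcd(a₂,m') = 1` and
`(a₁+a₂)·v ≡ C (mod u)`. Set `m = u·m'` and let `S ⊆ ℤ/mℤ` be the set of residue classes that
reduce to `v` modulo `u`. Then for every `γ₁ ∈ S` there is a unique `γ₂ ∈ S` with
`a₁·γ₁ + a₂·γ₂ ≡ C (mod m)`, and there is a bijection of `S` onto itself sending each `γ₁` to
this `γ₂`. -/
theorem stmt_9 (u m' a₁ a₂ : ℕ) (hu : 0 < u) (hm' : 0 < m') (ha₁ : 0 < a₁) (ha₂ : 0 < a₂)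
    (C v : ℤ)
    (h1 : Nat.Coprime u m') (h2 : Nat.Coprime a₁ m') (h3 : Nat.Coprime a₂ m')
    (hCv : (u : ℤ) ∣ C - ((a₁ : ℤ) + a₂) * v) :
    (∀ γ₁ : ZMod (u * m'),
        ZMod.castHom (dvd_mul_right u m') (ZMod u) γ₁ = (v : ZMod u) →
      ∃! γ₂ : ZMod (u * m'),
        ZMod.castHom (dvd_mul_right u m') (ZMod u) γ₂ = (v : ZMod u) ∧
        (a₁ : ZMod (u * m')) * γ₁ + (a₂ : ZMod (u * m')) * γ₂ = (C : ZMod (u * m'))) ∧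
    ∃ f : ZMod (u * m') → ZMod (u * m'),
      Set.BijOn f
        {γ : ZMod (u * m') | ZMod.castHom (dvd_mul_right u m') (ZMod u) γ = (v : ZMod u)}
        {γ : ZMod (u * m') | ZMod.castHom (dvd_mul_right u m') (ZMod u) γ = (v : ZMod u)} ∧
      ∀ γ₁ : ZMod (u * m'),
        ZMod.castHom (dvd_mul_right u m') (ZMod u) γ₁ = (v : ZMod u) →
        (a₁ : ZMod (u * m')) * γ₁ + (a₂ : ZMod (u * m')) * f γ₁ = (C : ZMod (u * m')) := by
  haveI : NeZero u := ⟨hu.ne'⟩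
  haveI : NeZero m' := ⟨hm'.ne'⟩
  haveI : NeZero (u * m') := ⟨Nat.mul_ne_zero hu.ne' hm'.ne'⟩
  set φu := ZMod.castHom (dvd_mul_right u m') (ZMod u) with hφu
  set φm := ZMod.castHom (dvd_mul_left m' u) (ZMod m') with hφm
  set crt := ZMod.chineseRemainder h1 with hcrt
  have hfst : ∀ x : ZMod (u * m'), (crt x).1 = φu x := by
    intro x
    have : (RingHom.fst (ZMod u) (ZMod m')).comp (crt : ZMod (u*m') →+* ZMod u × ZMod m') = φu :=
      Subsingleton.elim _ _
    exact congrFun (congrArg DFunLike.coe this) x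
  have hsnd : ∀ x : ZMod (u * m'), (crt x).2 = φm x := by
    intro x
    have : (RingHom.snd (ZMod u) (ZMod m')).comp (crt : ZMod (u*m') →+* ZMod u × ZMod m') = φm :=
      Subsingleton.elim _ _
    exact congrFun (congrArg DFunLike.coe this) x
  have key : ∀ x y : ZMod (u * m'), φu x = φu y → φm x = φm y → x = y := by
    intro x y h h'
    apply crt.injective
    exact Prod.ext (by rw [hfst, hfst]; exact h) (by rw [hsnd, hsnd]; exact h')
  have ha1u : IsUnit ((a₁ : ℕ) : ZMod m') := (ZMod.isUnit_iff_coprime a₁ m').mpr h2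
  have ha2u : IsUnit ((a₂ : ℕ) : ZMod m') := (ZMod.isUnit_iff_coprime a₂ m').mpr h3
  -- the value of C mod u
  have hCu : (C : ZMod u) = ((a₁ : ZMod u) + a₂) * (v : ZMod u) := by
    have h0 : ((C - ((a₁ : ℤ) + a₂) * v : ℤ) : ZMod u) = 0 :=
      (ZMod.intCast_zmod_eq_zero_iff_dvd _ u).mpr hCv
    push_cast at h0
    linear_combination h0
  -- the forward map
  set f : ZMod (u * m') → ZMod (u * m') := fun γ =>
    crt.symm ((v : ZMod u), ((a₂ : ZMod m'))⁻¹ * ((C : ZMod m') - (a₁ : ZMod m') * φm γ))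
    with hf
  have hfu : ∀ γ, φu (f γ) = (v : ZMod u) := by
    intro γ
    rw [← hfst]
    simp [hf]
  have hfm : ∀ γ, φm (f γ) = ((a₂ : ZMod m'))⁻¹ * ((C : ZMod m') - (a₁ : ZMod m') * φm γ) := by
    intro γ
    rw [← hsnd]
    simp [hf]
  -- the backward map
  set g : ZMod (u * m') → ZMod (u * m') := fun γ =>
    crt.symm ((v : ZMod u), ((a₁ : ZMod m'))⁻¹ * ((C : ZMod m') - (a₂ : ZMod m') * φm γ))
    with hg
  have hgu : ∀ γ, φu (g γ) = (v : ZMod u) := by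
    intro γ
    rw [← hfst]
    simp [hg]
  have hgm : ∀ γ, φm (g γ) = ((a₁ : ZMod m'))⁻¹ * ((C : ZMod m') - (a₂ : ZMod m') * φm γ) := by
    intro γ
    rw [← hsnd]
    simp [hg]
  -- main equation
  have hmain : ∀ γ₁ : ZMod (u * m'), φu γ₁ = (v : ZMod u) →
      (a₁ : ZMod (u * m')) * γ₁ + (a₂ : ZMod (u * m')) * f γ₁ = (C : ZMod (u * m')) := by
    intro γ₁ hγ₁
    apply key
    · rw [map_add, map_mul, map_mul, map_natCast, map_natCast, map_intCast, hγ₁, hfu, hCu]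
      ring
    · rw [map_add, map_mul, map_mul, map_natCast, map_natCast, map_intCast, hfm,
        ← mul_assoc, ZMod.mul_inv_of_unit _ ha2u, one_mul]
      ring
  constructor
  · intro γ₁ hγ₁
    refine ⟨f γ₁, ⟨hfu γ₁, hmain γ₁ hγ₁⟩, ?_⟩
    rintro γ₂ ⟨hγ₂u, hγ₂e⟩
    apply key
    · rw [hγ₂u, hfu]
    · -- a₂ * γ₂ = a₂ * f γ₁ in ZMod m
      have h5 : (a₂ : ZMod (u * m')) * γ₂ = (a₂ : ZMod (u * m')) * f γ₁ := by
        have := hmain γ₁ hγ₁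
        linear_combination hγ₂e - this
      have h6 := congrArg φm h5
      simp only [map_mul, map_natCast] at h6
      exact ha2u.mul_left_cancel h6
  · refine ⟨f, ⟨?_, ?_, ?_⟩, fun γ₁ hγ₁ => hmain γ₁ hγ₁⟩
    · intro γ _
      exact hfu γ
    · intro x hx y hy hxy
      apply key
      · rw [hx, hy]
      · have := congrArg φm hxy
        rw [hfm, hfm] at this
        have h6 : (a₂ : ZMod m') * (((a₂ : ZMod m'))⁻¹ * ((C : ZMod m') - (a₁ : ZMod m') * φm x))
            = (a₂ : ZMod m') * (((a₂ : ZMod m'))⁻¹ * ((C : ZMod m') - (a₁ : ZMod m') * φm y)) := by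
          rw [this]
        rw [← mul_assoc, ← mul_assoc, ZMod.mul_inv_of_unit _ ha2u, one_mul, one_mul] at h6
        have h7 : (a₁ : ZMod m') * φm x = (a₁ : ZMod m') * φm y := by
          linear_combination -h6
        exact ha1u.mul_left_cancel h7
    · intro δ hδ
      refine ⟨g δ, hgu δ, ?_⟩
      apply key
      · rw [hfu, hδ]
      · rw [hfm, hgm, ← mul_assoc ((a₁ : ℕ) : ZMod m'), ZMod.mul_inv_of_unit _ ha1u, one_mul,
          sub_sub_cancel, ← mul_assoc, ZMod.inv_mul_of_unit _ ha2u, one_mul]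
end

section
/- Let a, b, c, D be positive integers and let p(z) = a_D z^D + ... + a_1 z + a_0 ∈ ℤ[z] with a_D > 0, c ∣ a_1, and c² ∣ a_0, so that q(z) = Σ_{i=0}^{D} a_i c^{i−2} z^i is a polynomial with integer coefficients (q(z) = c^{-2}·p(c·z)). If the equation a·x + b·y = q(z) is 2-Ramsey, then the equation a·c·x + b·c·y = p(z) is 2-Ramsey. -/
/-- **Lifting lemma.** Let `a, b, c, D` be positive integers and
`p(z) = a_D z^D + ⋯ + a_1 z + a_0 ∈ ℤ[z]` with `a_D > 0`, `c ∣ a_1` and `c² ∣ a_0`, so that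
`q(z) = c^{-2}·p(c·z)` has integer coefficients (encoded by `c² · q(z) = p(c·z)` for all `z`).
If the equation `a·x + b·y = q(z)` is 2-Ramsey, then the equation `a·c·x + b·c·y = p(z)` is
2-Ramsey. -/
theorem stmt_10 (a b c D : ℕ) (ha : 0 < a) (hb : 0 < b) (hc : 0 < c) (hD : 0 < D)
    (p q : Polynomial ℤ) (hpdeg : p.natDegree = D) (hlead : 0 < p.leadingCoeff)
    (hc1 : (c : ℤ) ∣ p.coeff 1) (hc0 : (c : ℤ) ^ 2 ∣ p.coeff 0)
    (hq : ∀ z : ℤ, (c : ℤ) ^ 2 * q.eval z = p.eval ((c : ℤ) * z))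
    (hramsey : ∀ φ : ℕ → Fin 2,
      {w : ℕ × ℕ × ℕ | 0 < w.1 ∧ 0 < w.2.1 ∧ 0 < w.2.2 ∧
        φ w.1 = φ w.2.1 ∧ φ w.1 = φ w.2.2 ∧
        (a : ℤ) * w.1 + (b : ℤ) * w.2.1 = q.eval (w.2.2 : ℤ)}.Infinite) :
    ∀ φ : ℕ → Fin 2,
      {w : ℕ × ℕ × ℕ | 0 < w.1 ∧ 0 < w.2.1 ∧ 0 < w.2.2 ∧
        φ w.1 = φ w.2.1 ∧ φ w.1 = φ w.2.2 ∧
        ((a : ℤ) * c) * w.1 + ((b : ℤ) * c) * w.2.1 = p.eval (w.2.2 : ℤ)}.Infinite := by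
  intro φ
  have h := hramsey (fun n => φ (c * n))
  have hinj : Function.Injective (fun w : ℕ × ℕ × ℕ => (c * w.1, c * w.2.1, c * w.2.2)) := by
    intro ⟨x, y, z⟩ ⟨x', y', z'⟩ hw
    simp only [Prod.mk.injEq] at hw
    obtain ⟨h1, h2, h3⟩ := hw
    exact Prod.ext (Nat.eq_of_mul_eq_mul_left hc h1)
      (Prod.ext (Nat.eq_of_mul_eq_mul_left hc h2) (Nat.eq_of_mul_eq_mul_left hc h3))
  have himg := (h.image (fun x _ y _ hxy => hinj hxy))
  refine himg.mono ?_
  rintro _ ⟨⟨x, y, z⟩, ⟨hx, hy, hz, h1, h2, heq⟩, rfl⟩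
  refine ⟨by positivity, by positivity, by positivity, h1, h2, ?_⟩
  have := hq (z : ℤ)
  push_cast
  push_cast at heq
  nlinarith [this, heq]
end

section
/- Let p be a prime and let a, b be positive integers with p ∣ a and p ∤ b. Define the 2-colouring φ: ℤ⁺ → {0,1} by φ(t) = 0 if p ∣ t and φ(t) = 1 otherwise. Then there is no triple of positive integers (x, y, z) with φ(x) = φ(y) = φ(z) and a·x + b·y = z^{p−1} − 1. In particular, the equation a·x + b·y = z^{p−1} − 1 is not 2-Ramsey. -/
/-- **Example 2.** Let `p` be a prime and `a, b` positive integers with `p ∣ a`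
and `p ∤ b`. Colour a positive integer `t` with colour `0` if `p ∣ t` and colour `1` otherwise.
Then no monochromatic triple of positive integers `(x,y,z)` satisfies
`a·x + b·y = z^{p−1} − 1`; in particular the equation `a·x + b·y = z^{p−1} − 1` is not
2-Ramsey. -/
theorem stmt_11 (p : ℕ) (hp : p.Prime) (a b : ℕ) (ha : 0 < a) (hb : 0 < b)
    (hpa : p ∣ a) (hpb : ¬ p ∣ b) (φ : ℕ → Fin 2)
    (hφ : ∀ t : ℕ, φ t = if p ∣ t then 0 else 1) :
    (¬ ∃ x y z : ℕ, 0 < x ∧ 0 < y ∧ 0 < z ∧ φ x = φ y ∧ φ x = φ z ∧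
        (a : ℤ) * x + (b : ℤ) * y = (z : ℤ) ^ (p - 1) - 1) ∧
    ¬ (∀ ψ : ℕ → Fin 2,
        {w : ℕ × ℕ × ℕ | 0 < w.1 ∧ 0 < w.2.1 ∧ 0 < w.2.2 ∧
          ψ w.1 = ψ w.2.1 ∧ ψ w.1 = ψ w.2.2 ∧
          (a : ℤ) * w.1 + (b : ℤ) * w.2.1 = (w.2.2 : ℤ) ^ (p - 1) - 1}.Infinite) := by
  haveI : Fact p.Prime := ⟨hp⟩
  have key : ¬ ∃ x y z : ℕ, 0 < x ∧ 0 < y ∧ 0 < z ∧ φ x = φ y ∧ φ x = φ z ∧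
      (a : ℤ) * x + (b : ℤ) * y = (z : ℤ) ^ (p - 1) - 1 := by
    rintro ⟨x, y, z, hx, hy, hz, hxy, hxz, heq⟩
    have hE : ((a : ZMod p)) * x + (b : ZMod p) * y = (z : ZMod p) ^ (p - 1) - 1 := by
      have := congrArg (fun n : ℤ => (n : ZMod p)) heq
      push_cast at this
      exact_mod_cast this
    have haz : (a : ZMod p) = 0 := by
      exact_mod_cast (ZMod.natCast_eq_zero_iff a p).mpr hpa
    rw [haz, zero_mul, zero_add] at hE
    have hφx := hφ x; have hφy := hφ y; have hφz := hφ z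
    by_cases hpx : p ∣ x
    · -- color 0 : all divisible by p
      rw [if_pos hpx] at hφx
      have hpz : p ∣ z := by
        by_contra h
        rw [hφx, hφ z, if_neg h] at hxz
        exact absurd hxz (by decide)
      have hpy : p ∣ y := by
        by_contra h
        rw [hφx, hφ y, if_neg h] at hxy
        exact absurd hxy (by decide)
      have hyz : (y : ZMod p) = 0 := (ZMod.natCast_eq_zero_iff y p).mpr hpy
      have hzz : (z : ZMod p) = 0 := (ZMod.natCast_eq_zero_iff z p).mpr hpz
      rw [hyz, hzz, mul_zero, zero_pow (Nat.sub_ne_zero_of_lt hp.one_lt)] at hE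
      have : (1 : ZMod p) = 0 := by linear_combination hE
      exact one_ne_zero this
    · -- color 1 : none divisible by p
      rw [if_neg hpx] at hφx
      have hpz : ¬ p ∣ z := by
        intro h
        rw [hφx, hφ z, if_pos h] at hxz
        exact absurd hxz (by decide)
      have hpy : ¬ p ∣ y := by
        intro h
        rw [hφx, hφ y, if_pos h] at hxy
        exact absurd hxy (by decide)
      have hzz : (z : ZMod p) ≠ 0 := fun h =>
        hpz ((ZMod.natCast_eq_zero_iff z p).mp h)
      rw [ZMod.pow_card_sub_one_eq_one hzz, sub_self] at hE
      have hbz : (b : ZMod p) ≠ 0 := fun h =>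
        hpb ((ZMod.natCast_eq_zero_iff b p).mp h)
      have hyz : (y : ZMod p) ≠ 0 := fun h =>
        hpy ((ZMod.natCast_eq_zero_iff y p).mp h)
      exact (mul_ne_zero hbz hyz) hE
  refine ⟨key, fun h => ?_⟩
  obtain ⟨w, hw⟩ := (h φ).nonempty
  exact key ⟨w.1, w.2.1, w.2.2, hw.1, hw.2.1, hw.2.2.1, hw.2.2.2.1, hw.2.2.2.2.1, hw.2.2.2.2.2⟩
end

section
/- Let p be a prime, n ≥ 1 an integer, and let a, b be positive integers with p^n ∣ a and p^n ∤ b. Define the 2-colouring φ: ℤ⁺ → {0,1} by φ(t) = 0 if p ∣ t and φ(t) = 1 otherwise. Then there is no triple of positive integers (x, y, z) with φ(x) = φ(y) = φ(z) and a·x + b·y = z^{p^n − p^{n−1}} − 1. In particular, the equation a·x + b·y = z^{p^n − p^{n−1}} − 1 is not 2-Ramsey. -/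
/-- **Example 2, general form.** Let `p` be a prime, `n ≥ 1` an integer, and
`a, b` positive integers with `p^n ∣ a` and `p^n ∤ b`. Colour a positive integer `t` with colour
`0` if `p ∣ t` and colour `1` otherwise. Then no monochromatic triple of positive integers
`(x,y,z)` satisfies `a·x + b·y = z^{p^n − p^{n−1}} − 1`; in particular the equation
`a·x + b·y = z^{p^n − p^{n−1}} − 1` is not 2-Ramsey. -/
theorem stmt_12 (p : ℕ) (hp : p.Prime) (n : ℕ) (hn : 1 ≤ n) (a b : ℕ)
    (ha : 0 < a) (hb : 0 < b) (hpa : p ^ n ∣ a) (hpb : ¬ p ^ n ∣ b) (φ : ℕ → Fin 2)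
    (hφ : ∀ t : ℕ, φ t = if p ∣ t then 0 else 1) :
    (¬ ∃ x y z : ℕ, 0 < x ∧ 0 < y ∧ 0 < z ∧ φ x = φ y ∧ φ x = φ z ∧
        (a : ℤ) * x + (b : ℤ) * y = (z : ℤ) ^ (p ^ n - p ^ (n - 1)) - 1) ∧
    ¬ (∀ ψ : ℕ → Fin 2,
        {w : ℕ × ℕ × ℕ | 0 < w.1 ∧ 0 < w.2.1 ∧ 0 < w.2.2 ∧
          ψ w.1 = ψ w.2.1 ∧ ψ w.1 = ψ w.2.2 ∧
          (a : ℤ) * w.1 + (b : ℤ) * w.2.1 =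
            (w.2.2 : ℤ) ^ (p ^ n - p ^ (n - 1)) - 1}.Infinite) := by
  have he1 : 1 ≤ p ^ n - p ^ (n - 1) := by
    have := Nat.pow_lt_pow_right hp.one_lt (show n - 1 < n by omega)
    omega
  have he : p ^ n - p ^ (n - 1) = (p ^ n).totient := by
    rw [Nat.totient_prime_pow hp hn]
    have h1 : p ^ n = p ^ (n - 1) * p := by
      rw [← pow_succ]; congr 1; omega
    rw [h1, Nat.mul_sub, mul_one]
  have hnosol : ¬ ∃ x y z : ℕ, 0 < x ∧ 0 < y ∧ 0 < z ∧ φ x = φ y ∧ φ x = φ z ∧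
      (a : ℤ) * x + (b : ℤ) * y = (z : ℤ) ^ (p ^ n - p ^ (n - 1)) - 1 := by
    rintro ⟨x, y, z, hx, hy, hz, hxy, hxz, heq⟩
    have hφx := hφ x; have hφy := hφ y; have hφz := hφ z
    by_cases hpx : p ∣ x
    · have hpy : p ∣ y := by
        by_contra h
        rw [hφx, hφy, if_pos hpx, if_neg h] at hxy
        exact absurd hxy (by decide)
      have hpz : p ∣ z := by
        by_contra h
        rw [hφx, hφz, if_pos hpx, if_neg h] at hxz
        exact absurd hxz (by decide)
      have hpa' : (p : ℤ) ∣ (a : ℤ) :=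
        Int.natCast_dvd_natCast.2 (dvd_trans (dvd_pow_self p (by omega)) hpa)
      have h1 : (p : ℤ) ∣ (z : ℤ) ^ (p ^ n - p ^ (n - 1)) :=
        dvd_pow (Int.natCast_dvd_natCast.2 hpz) (by omega)
      have h2 : (p : ℤ) ∣ (a : ℤ) * x + (b : ℤ) * y :=
        dvd_add (hpa'.mul_right _) ((Int.natCast_dvd_natCast.2 hpy).mul_left _)
      have h3 : (p : ℤ) ∣ (z : ℤ) ^ (p ^ n - p ^ (n - 1)) - ((a : ℤ) * x + (b : ℤ) * y) :=
        dvd_sub h1 h2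
      rw [heq] at h3
      simp only [sub_sub_cancel] at h3
      have := Int.le_of_dvd one_pos h3
      have := hp.one_lt
      omega
    · have hpy : ¬ p ∣ y := by
        intro h
        rw [hφx, hφy, if_neg hpx, if_pos h] at hxy
        exact absurd hxy (by decide)
      have hpz : ¬ p ∣ z := by
        intro h
        rw [hφx, hφz, if_neg hpx, if_pos h] at hxz
        exact absurd hxz (by decide)
      have hcop : z.Coprime (p ^ n) :=
        (Nat.Coprime.pow_right n ((hp.coprime_iff_not_dvd.2 hpz).symm))
      have hEuler : z ^ (p ^ n).totient ≡ 1 [MOD p ^ n] := Nat.ModEq.pow_totient hcop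
      have h1 : ((p ^ n : ℕ) : ℤ) ∣ (1 : ℤ) - (z : ℤ) ^ (p ^ n - p ^ (n - 1)) := by
        have := hEuler.dvd
        rw [he]
        push_cast at this ⊢
        convert this using 2
      have h2 : ((p ^ n : ℕ) : ℤ) ∣ (a : ℤ) * x + (b : ℤ) * y := by
        have : (a : ℤ) * x + (b : ℤ) * y = -((1 : ℤ) - (z : ℤ) ^ (p ^ n - p ^ (n - 1))) := by
          rw [heq]; ring
        rw [this]
        exact h1.neg_right
      have h3 : ((p ^ n : ℕ) : ℤ) ∣ (b : ℤ) * y := by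
        have ha2 : ((p ^ n : ℕ) : ℤ) ∣ (a : ℤ) * x :=
          (Int.natCast_dvd_natCast.2 hpa).mul_right _
        have := dvd_sub h2 ha2
        simpa using this
      have h4 : p ^ n ∣ b * y := by exact_mod_cast h3
      have hcopy : (p ^ n).Coprime y :=
        Nat.Coprime.pow_left n (hp.coprime_iff_not_dvd.2 hpy)
      exact hpb (hcopy.dvd_of_dvd_mul_right h4)
  refine ⟨hnosol, fun hall => ?_⟩
  obtain ⟨w, hw⟩ := (hall φ).nonempty
  exact hnosol ⟨w.1, w.2.1, w.2.2, hw.1, hw.2.1, hw.2.2.1, hw.2.2.2.1, hw.2.2.2.2.1,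
    hw.2.2.2.2.2⟩
end

section
/- Let p ∈ ℤ[z] be a polynomial of degree at least 2 with positive leading coefficient, and let a, b be distinct positive integers with gcd(a,b) = 1; set U = max(a,b). Let d be a positive integer and t an integer with (a+b)·t ≡ p(t) (mod d). Let φ: ℤ⁺ → {0,1} be a 2-colouring such that only finitely many triples of positive integers (x, y, z) satisfy a·x + b·y = p(z) and φ(x) = φ(y) = φ(z). Call a positive integer k with k ≡ t (mod d) a d-switch if φ(k) ≠ φ(k+d), and call two d-switches k₁ < k₂ neighbouring if there is no d-switch k₃ with k₁ < k₃ < k₂. Then there exist infinitely many pairs of neighbouring d-switches k₁ < k₂ with k₂ < U·k₁. -/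
open Polynomial Filter

private lemma fin2cases (x y z : Fin 2) (h : x ≠ y) : z = x ∨ z = y := by
  fin_cases x <;> fin_cases y <;> fin_cases z <;> simp_all

private lemma fin2resolve (x y z : Fin 2) (h : x ≠ y) (h2 : z ≠ x) : z = y := by
  fin_cases x <;> fin_cases y <;> fin_cases z <;> simp_all

private lemma evGe (q : Polynomial ℤ) (h0 : 0 < q.degree) (hq : 0 < q.leadingCoeff) (T : ℤ) :
    ∃ S : ℕ, ∀ s : ℕ, S ≤ s → T ≤ q.eval (s : ℤ) := by
  have hinj : Function.Injective (Int.castRingHom ℝ) := fun x y hxy => by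
    simpa using hxy
  have hmap : Tendsto (fun x : ℝ => (q.map (Int.castRingHom ℝ)).eval x) atTop atTop := by
    apply Polynomial.tendsto_atTop_of_leadingCoeff_nonneg
    · rwa [degree_map_eq_of_injective hinj]
    · rw [leadingCoeff_map_of_injective hinj]
      have : (0:ℝ) < (q.leadingCoeff : ℝ) := by exact_mod_cast hq
      simpa using this.le
  have hcomp : Tendsto (fun s : ℕ => (q.map (Int.castRingHom ℝ)).eval ((s:ℕ) : ℝ)) atTop atTop :=
    hmap.comp tendsto_natCast_atTop_atTop
  have hev := hcomp.eventually_ge_atTop (T : ℝ)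
  rw [eventually_atTop] at hev
  obtain ⟨S, hS⟩ := hev
  refine ⟨S, fun s hs => ?_⟩
  have := hS s hs
  rw [Polynomial.eval_map, Polynomial.eval₂_at_natCast] at this
  simp only [eq_intCast, map_intCast] at this
  exact_mod_cast this

private lemma instEv (p : Polynomial ℤ) (h2 : 2 ≤ p.natDegree) (hL : 0 < p.leadingCoeff)
    (c : ℤ) (hc : 0 < c) (r : Polynomial ℤ) (hr : r.degree < p.degree) :
    ∃ S : ℕ, ∀ s : ℕ, S ≤ s → 0 ≤ c * p.eval (s:ℤ) + r.eval (s:ℤ) := by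
  have hp0 : p ≠ 0 := fun h => by simp [h, leadingCoeff_zero] at hL
  have hcp : (C c * p).degree = p.degree := degree_C_mul (by exact hc.ne')
  have hrq : r.degree < (C c * p).degree := hcp ▸ hr
  have hdeg : (C c * p + r).degree = p.degree := by
    rw [degree_add_eq_left_of_degree_lt hrq, hcp]
  have hlc : (C c * p + r).leadingCoeff = c * p.leadingCoeff := by
    rw [leadingCoeff_add_of_degree_lt' hrq, leadingCoeff_mul, leadingCoeff_C]
  have h0 : 0 < (C c * p + r).degree := by
    rw [hdeg]
    have : 0 < p.natDegree := by omega
    exact natDegree_pos_iff_degree_pos.mp this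
  have hq : 0 < (C c * p + r).leadingCoeff := by
    rw [hlc]; exact mul_pos hc hL
  obtain ⟨S, hS⟩ := evGe _ h0 hq 0
  exact ⟨S, fun s hs => by simpa using hS s hs⟩

set_option maxHeartbeats 1000000 in
private theorem stmt15_aux (p : Polynomial ℤ) (hdeg : 2 ≤ p.natDegree) (hlead : 0 < p.leadingCoeff)
    (a b : ℕ) (ha : 0 < a) (hlt : a < b) (hab : Nat.gcd a b = 1)
    (d : ℕ) (hd : 0 < d) (t : ℤ) (ht : (d : ℤ) ∣ p.eval t - ((a : ℤ) + b) * t)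
    (φ : ℕ → Fin 2)
    (hfin : {w : ℕ × ℕ × ℕ | 0 < w.1 ∧ 0 < w.2.1 ∧ 0 < w.2.2 ∧
      φ w.1 = φ w.2.1 ∧ φ w.1 = φ w.2.2 ∧
      (a : ℤ) * w.1 + (b : ℤ) * w.2.1 = p.eval (w.2.2 : ℤ)}.Finite)
    (Switch : ℕ → Prop)
    (hSwitch : ∀ k : ℕ, Switch k ↔
      0 < k ∧ (d : ℤ) ∣ (k : ℤ) - t ∧ φ k ≠ φ (k + d)) :
    ∀ N : ℕ, ∃ k₁ k₂ : ℕ, N < k₁ ∧ k₁ < k₂ ∧ Switch k₁ ∧ Switch k₂ ∧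
      (∀ k₃ : ℕ, Switch k₃ → ¬ (k₁ < k₃ ∧ k₃ < k₂)) ∧ k₂ < b * k₁ := by
  by_contra hcon
  push_neg at hcon
  obtain ⟨N, hN⟩ := hcon
  classical
  -- switch sparsity
  have star : ∀ u v : ℕ, Switch u → Switch v → N < u → u < v → b * u ≤ v := by
    intro u v hu hv hNu huv
    have hex : ∃ k, Switch k ∧ u < k := ⟨v, hv, huv⟩
    have hs' : Switch (Nat.find hex) ∧ u < Nat.find hex := Nat.find_spec hex
    have hle : Nat.find hex ≤ v := Nat.find_min' hex ⟨hv, huv⟩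
    have hnb : ∀ k₃, Switch k₃ → u < k₃ → Nat.find hex ≤ k₃ :=
      fun k₃ hk₃ h1 => Nat.find_min' hex ⟨hk₃, h1⟩
    have := hN u (Nat.find hex) hNu hs'.2 hu hs'.1 hnb
    omega
  -- colour constancy along the progression between switches
  have colour : ∀ (j n : ℕ), 0 < n → (d:ℤ) ∣ (n:ℤ) - t →
      (∀ k, Switch k → n ≤ k → k < n + j*d → False) → φ n = φ (n + j*d) := by
    intro j
    induction j with
    | zero => intro n _ _ _; simp
    | succ j ih =>
      intro n hn hdvd hns
      have hmono : j*d ≤ (j+1)*d := Nat.mul_le_mul_right d (by omega)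
      have h1 : φ n = φ (n + j*d) := ih n hn hdvd (fun k hk hk1 hk2 => hns k hk hk1 (by omega))
      have h2 : φ (n + j*d) = φ (n + j*d + d) := by
        by_contra hne2
        have hdvd2 : (d:ℤ) ∣ ((n + j*d : ℕ):ℤ) - t := by
          have he : ((n + j*d : ℕ):ℤ) - t = ((n:ℤ) - t) + (d:ℤ) * j := by push_cast; ring
          rw [he]; exact dvd_add hdvd ⟨j, rfl⟩
        have hsw : Switch (n + j*d) := (hSwitch _).mpr ⟨by omega, hdvd2, hne2⟩
        have hlt2 : n + j*d < n + (j+1)*d := by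
          have : (j+1)*d = j*d + d := by ring
          omega
        exact hns _ hsw (by omega) hlt2
      have he : n + (j+1)*d = n + j*d + d := by ring
      rw [he]; exact h1.trans h2
  have colour' : ∀ n m : ℕ, 0 < n → (d:ℤ) ∣ (n:ℤ) - t → (d:ℤ) ∣ (m:ℤ) - t → n ≤ m →
      (∀ k, Switch k → n ≤ k → k < m → False) → φ n = φ m := by
    intro n m hn hdn hdm hnm hns
    have hdvd : (d:ℤ) ∣ ((m:ℤ) - n) := by
      have he : (m:ℤ) - n = ((m:ℤ) - t) - ((n:ℤ) - t) := by ring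
      rw [he]; exact dvd_sub hdm hdn
    have hdvd' : d ∣ m - n := by
      have he : ((m - n : ℕ) : ℤ) = (m:ℤ) - n := by
        have := hnm; push_cast [Nat.cast_sub this]; ring
      rwa [← he, Int.natCast_dvd_natCast] at hdvd
    obtain ⟨j, hj⟩ := hdvd'
    have hm : m = n + j*d := by
      have h2 : m = d*j + n := by omega
      rw [h2]; ring
    rw [hm]
    exact colour j n hn hdn (fun k hk h1 h2 => hns k hk h1 (by omega))
  have switch_between : ∀ n m : ℕ, 0 < n → (d:ℤ) ∣ (n:ℤ) - t → (d:ℤ) ∣ (m:ℤ) - t → n ≤ m →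
      φ n ≠ φ m → ∃ k, Switch k ∧ n ≤ k ∧ k < m := by
    intro n m hn hdn hdm hnm hne
    by_contra hcon2
    push_neg at hcon2
    exact hne (colour' n m hn hdn hdm hnm (fun k hk h1 h2 => by
      have := hcon2 k hk h1; omega))
  -- coprimality witnesses
  obtain ⟨e, f, hef⟩ : ∃ e f : ℤ, e * a + f * b = 1 := by
    have hco : IsCoprime (a:ℤ) (b:ℤ) := by
      rw [Int.isCoprime_iff_gcd_eq_one]
      simpa using hab
    obtain ⟨e, f, hef⟩ := hco
    exact ⟨e, f, hef⟩
  have hdZ : (0:ℤ) < d := by exact_mod_cast hd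
  have hbZ : (0:ℤ) < b := by exact_mod_cast (by omega : 0 < b)
  have haZ : (0:ℤ) < a := by exact_mod_cast ha
  have habZ : (a:ℤ) < b := by exact_mod_cast hlt
  have dvdP : ∀ z : ℕ, (d:ℤ) ∣ (z:ℤ) - t → (d:ℤ) ∣ p.eval (z:ℤ) - ((a:ℤ)+b) * z := by
    intro z hz
    have h1 : (d:ℤ) ∣ p.eval (z:ℤ) - p.eval t := dvd_trans hz (sub_dvd_eval_sub _ _ p)
    have h2 : (d:ℤ) ∣ ((a:ℤ)+b) * ((t:ℤ) - z) := by
      refine dvd_mul_of_dvd_right ?_ _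
      have he2 : (t:ℤ) - z = -((z:ℤ) - t) := by ring
      rw [he2]; exact dvd_neg.mpr hz
    have he : p.eval (z:ℤ) - ((a:ℤ)+b)*z =
        (p.eval (z:ℤ) - p.eval t) + (p.eval t - ((a:ℤ)+b)*t) + ((a:ℤ)+b)*((t:ℤ) - z) := by ring
    rw [he]; exact dvd_add (dvd_add h1 ht) h2
  -- generic solution with x in a prescribed window
  have sol : ∀ z : ℕ, (d:ℤ) ∣ (z:ℤ) - t → ∀ w : ℤ, ∃ x y : ℤ,
      (a:ℤ) * x + (b:ℤ) * y = p.eval (z:ℤ) ∧ w < x ∧ x ≤ w + d * b ∧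
      (d:ℤ) ∣ x - t ∧ (d:ℤ) ∣ y - t := by
    intro z hdz w
    obtain ⟨M, hM⟩ := dvdP z hdz
    set u₀ : ℤ := e * M with hu₀
    set R : ℤ := ((z:ℤ) + d*u₀ - (w+1)) % (d*b) with hR
    set x : ℤ := w + 1 + R with hx
    have hdbpos : (0:ℤ) < (d:ℤ)*b := by positivity
    have hr1 : 0 ≤ R := Int.emod_nonneg _ hdbpos.ne'
    have hr2 : R < (d:ℤ)*b := Int.emod_lt_of_pos _ hdbpos
    have hxz : ((d:ℤ)*b) ∣ x - ((z:ℤ) + d*u₀) := by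
      have he : x - ((z:ℤ) + d*u₀) = -(((z:ℤ) + d*u₀ - (w+1)) - R) := by rw [hx]; ring
      rw [he]
      refine dvd_neg.mpr ⟨((z:ℤ) + d*u₀ - (w+1)) / ((d:ℤ)*b), ?_⟩
      rw [hR, Int.emod_def]; ring
    obtain ⟨k, hk⟩ := hxz
    have hdx : x - z = (d:ℤ) * (u₀ + b*k) := by linear_combination hk
    have hbu : (b:ℤ) ∣ M - a * (u₀ + b*k) := by
      have h2 : (b:ℤ) ∣ M - a * u₀ := ⟨f * M, by rw [hu₀]; linear_combination (-M) * hef⟩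
      have he : M - a*(u₀ + b*k) = (M - a*u₀) - b*(a*k) := by ring
      rw [he]; exact dvd_sub h2 ⟨a*k, rfl⟩
    obtain ⟨v, hv⟩ := hbu
    refine ⟨x, z + d*v, ?_, by linarith, by linarith, ?_, ?_⟩
    · linear_combination (a:ℤ) * hdx - (d:ℤ) * hv - hM
    · have he : x - t = (x - z) + ((z:ℤ) - t) := by ring
      rw [he, hdx]; exact dvd_add ⟨u₀ + b*k, rfl⟩ hdz
    · have he : ((z:ℤ) + d*v) - t = ((z:ℤ) - t) + (d:ℤ)*v := by ring
      rw [he]; exact dvd_add hdz ⟨v, rfl⟩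
  -- balanced ("crossing") solution
  have cross : ∀ z : ℕ, (d:ℤ) ∣ (z:ℤ) - t →
      ((d:ℤ) * (((a:ℤ)+b) * b) ≤ p.eval (z:ℤ) - ((a:ℤ)+b) * z) → ∃ x y : ℤ,
      (a:ℤ) * x + (b:ℤ) * y = p.eval (z:ℤ) ∧ x ≤ y ∧ y < x + d * ((a:ℤ)+b) ∧
      (z:ℤ) ≤ x ∧ (d:ℤ) ∣ x - t ∧ (d:ℤ) ∣ y - t := by
    intro z hdz hbig
    obtain ⟨M, hM⟩ := dvdP z hdz
    have hMbig : ((a:ℤ)+b) * b ≤ M := by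
      rw [hM] at hbig
      exact le_of_mul_le_mul_left hbig hdZ
    set u₀ : ℤ := (e * M) % b with hu₀
    have h0u : 0 ≤ u₀ := Int.emod_nonneg _ hbZ.ne'
    have hub : u₀ < b := Int.emod_lt_of_pos _ hbZ
    have hdu : (b:ℤ) ∣ M - a * u₀ := by
      have h2 : (b:ℤ) ∣ M - a * (e*M) := ⟨f*M, by linear_combination (-M)*hef⟩
      have h3 : (b:ℤ) ∣ a * (e*M) - a * u₀ := by
        have he3 : a * (e*M) - a * u₀ = (a:ℤ) * (e*M - u₀) := by ring
        rw [he3]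
        refine dvd_mul_of_dvd_right ⟨(e*M)/b, ?_⟩ _
        rw [hu₀, Int.emod_def]; ring
      have he : M - a*u₀ = (M - a*(e*M)) + (a*(e*M) - a*u₀) := by ring
      rw [he]; exact dvd_add h2 h3
    obtain ⟨v₀, hv₀⟩ := hdu
    have habpos : (0:ℤ) < (a:ℤ)+b := by positivity
    have hv₀u₀ : u₀ ≤ v₀ := by nlinarith [hv₀, hMbig, hub, h0u]
    set j : ℤ := (v₀ - u₀) / ((a:ℤ)+b) with hj
    have hjnn : 0 ≤ j := Int.ediv_nonneg (by omega) habpos.le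
    have hrho1 : 0 ≤ (v₀ - u₀) % ((a:ℤ)+b) := Int.emod_nonneg _ habpos.ne'
    have hrho2 : (v₀ - u₀) % ((a:ℤ)+b) < (a:ℤ)+b := Int.emod_lt_of_pos _ habpos
    have hjeq : v₀ - u₀ = ((a:ℤ)+b) * j + (v₀ - u₀) % ((a:ℤ)+b) := (Int.mul_ediv_add_emod _ _).symm
    refine ⟨z + d*(u₀ + b*j), z + d*(v₀ - a*j), ?_, ?_, ?_, ?_, ?_, ?_⟩
    · linear_combination (-(d:ℤ)) * hv₀ - hM
    · have he : (v₀ - a*j) - (u₀ + b*j) = (v₀ - u₀) % ((a:ℤ)+b) := by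
        linear_combination hjeq
      have h1 : (0:ℤ) ≤ d * ((v₀ - a*j) - (u₀ + b*j)) := by
        rw [he]; exact mul_nonneg hdZ.le hrho1
      linarith
    · have he : ((z:ℤ) + d*(v₀ - a*j)) - ((z:ℤ) + d*(u₀ + b*j)) = (d:ℤ) * ((v₀ - u₀) % ((a:ℤ)+b)) := by
        linear_combination (d:ℤ) * hjeq
      have h1 : (d:ℤ) * ((v₀ - u₀) % ((a:ℤ)+b)) < d * ((a:ℤ)+b) :=
        mul_lt_mul_of_pos_left hrho2 hdZ
      linarith
    · have h1 : (0:ℤ) ≤ u₀ + b*j := add_nonneg h0u (mul_nonneg hbZ.le hjnn)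
      have h2 : (0:ℤ) ≤ (d:ℤ) * (u₀ + b*j) := mul_nonneg hdZ.le h1
      linarith
    · have he : ((z:ℤ) + d*(u₀ + b*j)) - t = ((z:ℤ) - t) + (d:ℤ)*(u₀ + b*j) := by ring
      rw [he]; exact dvd_add hdz ⟨_, rfl⟩
    · have he : ((z:ℤ) + d*(v₀ - a*j)) - t = ((z:ℤ) - t) + (d:ℤ)*(v₀ - a*j) := by ring
      rw [he]; exact dvd_add hdz ⟨_, rfl⟩
  -- polynomial shifted by d, and degree facts
  have hp0 : p ≠ 0 := fun h => by simp [h, leadingCoeff_zero] at hlead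
  have hpddeg : (p.comp (X + C (d:ℤ))).natDegree = p.natDegree := by
    rw [natDegree_comp, natDegree_X_add_C, mul_one]
  have hpdlc : (p.comp (X + C (d:ℤ))).leadingCoeff = p.leadingCoeff := by
    rw [leadingCoeff_comp (by rw [natDegree_X_add_C]; exact one_ne_zero),
      leadingCoeff_X_add_C, one_pow, mul_one]
  have hpd0 : p.comp (X + C (d:ℤ)) ≠ 0 := fun h => by
    rw [h, leadingCoeff_zero] at hpdlc
    exact hlead.ne (hpdlc)
  have hDdeg : (p.comp (X + C (d:ℤ)) - p).degree < p.degree := by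
    have hdd : (p.comp (X + C (d:ℤ))).degree = p.degree := by
      rw [degree_eq_natDegree hpd0, degree_eq_natDegree hp0, hpddeg]
    have h1 := degree_sub_lt hdd hpd0 hpdlc
    rwa [hdd] at h1
  have h1deg : (1 : WithBot ℕ) < p.degree := by
    rw [degree_eq_natDegree hp0]
    exact_mod_cast (by omega : 1 < p.natDegree)
  have hpdev : ∀ s : ℕ, (p.comp (X + C (d:ℤ))).eval (s:ℤ) = p.eval ((s:ℤ) + d) := by
    intro s; simp [eval_comp]
  have mkInst : ∀ c : ℤ, 0 < c → ∀ c' g h : ℤ, ∃ S : ℕ, ∀ s : ℕ, S ≤ s →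
      0 ≤ c * p.eval (s:ℤ) + (c' * (p.eval ((s:ℤ)+d) - p.eval (s:ℤ)) + (g * s + h)) := by
    intro c hc c' g h
    have htail : (C c' * (p.comp (X + C (d:ℤ)) - p) + (C g * X + C h)).degree < p.degree := by
      apply lt_of_le_of_lt (degree_add_le _ _)
      apply max_lt
      · refine lt_of_le_of_lt ?_ hDdeg
        calc (C c' * (p.comp (X + C (d:ℤ)) - p)).degree
            ≤ (C c').degree + (p.comp (X + C (d:ℤ)) - p).degree := degree_mul_le _ _
          _ ≤ 0 + (p.comp (X + C (d:ℤ)) - p).degree := add_le_add degree_C_le le_rfl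
          _ = (p.comp (X + C (d:ℤ)) - p).degree := zero_add _
      · exact lt_of_le_of_lt degree_linear_le h1deg
    obtain ⟨S, hS⟩ := instEv p hdeg hlead c hc _ htail
    refine ⟨S, fun s hs => ?_⟩
    have h2 := hS s hs
    simpa [eval_add, eval_mul, eval_sub, eval_C, eval_X, hpdev s] using h2
  -- eventual inequalities
  obtain ⟨S1, hS1⟩ := mkInst 1 one_pos 0 (-(a:ℤ)) (-((b:ℤ)*N + b))
  obtain ⟨S2, hS2⟩ := mkInst 1 one_pos 1 (-(a:ℤ)) (-((a:ℤ)*d + (a:ℤ)*b*d + (b:ℤ)*N + b))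
  obtain ⟨S3, hS3⟩ := mkInst 1 one_pos 0 (-((a:ℤ)+b)) (-((d:ℤ)*b*((a:ℤ)+b)))
  obtain ⟨S4, hS4⟩ := mkInst 1 one_pos 1 (-((a:ℤ)+b)) (-(((a:ℤ)+b)*d + (d:ℤ)*b*((a:ℤ)+b)))
  obtain ⟨S5, hS5⟩ := mkInst a haZ 0 (-((a:ℤ)*((a:ℤ)+b))) (-((a:ℤ)*b*d*((a:ℤ)+b)))
  obtain ⟨S6, hS6⟩ := mkInst a haZ ((a:ℤ)+b) (-((a:ℤ)*((a:ℤ)+b)))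
    (-(((a:ℤ)+b)*a*((d:ℤ)+(b:ℤ)*d) + (a:ℤ)*b*d*((a:ℤ)+b)))
  obtain ⟨S7, hS7⟩ := mkInst a haZ (-(b:ℤ)) (-((a:ℤ)*((a:ℤ)+b))) (-((a:ℤ)*b*d*((a:ℤ)+b)))
  obtain ⟨S8, hS8⟩ := mkInst a haZ (a:ℤ) (-((a:ℤ)*((a:ℤ)+b)))
    (-((a:ℤ)*((a:ℤ)+b)*((d:ℤ)+(b:ℤ)*d) + (a:ℤ)*b*d*((a:ℤ)+b)))
  have hc2 : (0:ℤ) < (b:ℤ)*b - a - b := by nlinarith [habZ, haZ]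
  obtain ⟨S9, hS9⟩ := mkInst ((b:ℤ)*b - a - b) hc2 (-((a:ℤ)+b)) 0
    (-((b:ℤ)*b*b*d*((a:ℤ)+b) + 1))
  obtain ⟨S10, hS10⟩ := mkInst ((b:ℤ)*b - a - b) hc2 0 0
    (-(((a:ℤ)+b)*a*b*d + (b:ℤ)*b*b*d*((a:ℤ)+b) + 1))
  obtain ⟨S11, hS11⟩ := mkInst ((b:ℤ)*b - a - b) hc2 ((b:ℤ)*b - a - b) 0
    (-((b:ℤ)*b*b*d*((a:ℤ)+b) + 1))
  obtain ⟨S12, hS12⟩ := mkInst ((b:ℤ)*b - a - b) hc2 ((b:ℤ)*b) 0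
    (-(((a:ℤ)+b)*a*b*d + (b:ℤ)*b*b*d*((a:ℤ)+b) + 1))
  have key : ∀ B : ℕ, ∃ x y z : ℕ, 0 < x ∧ 0 < y ∧ 0 < z ∧ φ x = φ y ∧ φ x = φ z ∧
      (a:ℤ) * x + (b:ℤ) * y = p.eval (z:ℤ) ∧ B < z := by
    intro B
    by_cases hUB : ∀ R : ℕ, ∃ s, Switch s ∧ R < s
    · -- switches unbounded: pick a huge switch s
      obtain ⟨s, hssw, hsgt⟩ := hUB (N + B + d*b*b + d*b + 2*d + 2 +
        (S1+S2+S3+S4+S5+S6+S7+S8+S9+S10+S11+S12))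
      obtain ⟨hs0, hsdvd, hsφ⟩ := (hSwitch s).mp hssw
      have hsN : N < s := by omega
      have hsB : B < s := by omega
      have hs_dbb : d*b*b + d*b + 2*d + 2 + N < s := by omega
      have hs_dbbZ : (d:ℤ)*b*b + (d:ℤ)*b + 2*(d:ℤ) + 2 + (N:ℤ) < (s:ℤ) := by
        exact_mod_cast hs_dbb
      have hsnn : (0:ℤ) ≤ (s:ℤ) := by positivity
      have hNnn : (0:ℤ) ≤ (N:ℤ) := by positivity
      have hdb_nn : (0:ℤ) ≤ (d:ℤ)*b := by positivity
      have hdbb_nn : (0:ℤ) ≤ (d:ℤ)*b*b := by positivity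
      have noswleft : ∀ τ : ℕ, Switch τ → N < τ → τ < s → b * τ ≤ s :=
        fun τ h1 h2 h3 => star τ s h1 hssw h2 h3
      have noswright : ∀ τ : ℕ, Switch τ → s < τ → b * s ≤ τ :=
        fun τ h1 h3 => star s τ hssw h1 hsN h3
      have hsdcast : ((s + d : ℕ) : ℤ) = (s:ℤ) + d := by push_cast; ring
      have hsd_dvd : (d:ℤ) ∣ ((s + d : ℕ) : ℤ) - t := by
        have he : ((s + d : ℕ) : ℤ) - t = ((s:ℤ) - t) + d * 1 := by push_cast; ring
        rw [he]; exact dvd_add hsdvd ⟨1, rfl⟩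
      have hT1 := hS1 s (by omega); have hT2 := hS2 s (by omega)
      have hT3 := hS3 s (by omega); have hT4 := hS4 s (by omega)
      have hI1 := hS5 s (by omega); have hI2 := hS6 s (by omega)
      have hI3 := hS7 s (by omega); have hI4 := hS8 s (by omega)
      have hI5 := hS9 s (by omega); have hI6 := hS10 s (by omega)
      have hI7 := hS11 s (by omega); have hI8 := hS12 s (by omega)
      -- step (ii): solution for z = s with x just below s
      obtain ⟨x₀, y₀, heq₀, hx₀1, hx₀2, hdx₀, hdy₀⟩ := sol s hsdvd ((s:ℤ) - d*b)
      have hx₀le : x₀ ≤ (s:ℤ) := by linarith only [hx₀2, hdb_nn]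
      have hby₀ : (b:ℤ) * y₀ = p.eval (s:ℤ) - a * x₀ := by linarith only [heq₀]
      have hx₀N : (N:ℤ) < x₀ := by linarith only [hx₀1, hs_dbbZ, hNnn, hdZ, hdbb_nn]
      have hx₀0 : (0:ℤ) < x₀ := by linarith only [hx₀N, hNnn]
      have hx₀cast : ((x₀.toNat : ℕ) : ℤ) = x₀ := Int.toNat_of_nonneg hx₀0.le
      have hbx₀ : (s:ℤ) < (b:ℤ) * x₀ := by
        have h2 : (b:ℤ) * ((s:ℤ) - d*b + 1) ≤ (b:ℤ) * x₀ :=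
          mul_le_mul_of_nonneg_left (by linarith only [hx₀1]) hbZ.le
        have h4 : (d:ℤ)*b*b ≤ (s:ℤ) := by linarith only [hs_dbbZ, hdb_nn, hdZ, hNnn]
        have h5 : (s:ℤ) ≤ ((b:ℤ)-1) * s := le_mul_of_one_le_left hsnn (by linarith only [habZ, haZ])
        linarith only [h2, h4, h5, hbZ]
      have hφx₀ : φ x₀.toNat = φ s := by
        refine colour' x₀.toNat s (by omega) (by rw [hx₀cast]; exact hdx₀) hsdvd
          (by omega) ?_
        intro k hk h1 h2
        have hkN : N < k := by
          have h3 : (N:ℤ) < (k:ℤ) := by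
            have h4 : (x₀.toNat : ℤ) ≤ (k:ℤ) := by exact_mod_cast h1
            omega
          exact_mod_cast h3
        have hbk := noswleft k hk hkN h2
        have hbksZ : ((b:ℕ):ℤ) * k ≤ (s:ℤ) := by exact_mod_cast hbk
        have hx₀k : x₀ ≤ (k:ℤ) := by
          have h4 : (x₀.toNat : ℤ) ≤ (k:ℤ) := by exact_mod_cast h1
          omega
        have h5 : (b:ℤ) * x₀ ≤ (b:ℤ) * k := mul_le_mul_of_nonneg_left hx₀k hbZ.le
        linarith only [hbx₀, h5, hbksZ]
      have hay₀ : (a:ℤ)*x₀ ≤ (a:ℤ)*s := mul_le_mul_of_nonneg_left hx₀le haZ.le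
      have hay₀' : (a:ℤ)*((s:ℤ) - d*b + 1) ≤ (a:ℤ)*x₀ :=
        mul_le_mul_of_nonneg_left (by linarith only [hx₀1]) haZ.le
      have hy₀N : (N:ℤ) < y₀ := by
        have h3 : (b:ℤ)*((N:ℤ)+1) ≤ (b:ℤ)*y₀ := by linarith only [hT1, hby₀, hay₀]
        have := le_of_mul_le_mul_left h3 hbZ
        linarith only [this]
      have hy₀0 : (0:ℤ) < y₀ := by linarith only [hy₀N, hNnn]
      have hy₀cast : ((y₀.toNat : ℕ) : ℤ) = y₀ := Int.toNat_of_nonneg hy₀0.le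
      by_cases hc₀ : φ y₀.toNat = φ s
      · refine ⟨x₀.toNat, y₀.toNat, s, by omega, by omega, hs0,
          hφx₀.trans hc₀.symm, hφx₀, ?_, hsB⟩
        rw [hx₀cast, hy₀cast]; exact heq₀
      -- step (i): solution for z = s + d with x just above s + d
      obtain ⟨x₁, y₁, heq₁, hx₁1, hx₁2, hdx₁, hdy₁⟩ := sol (s+d) hsd_dvd ((s:ℤ) + d - 1)
      rw [hsdcast] at heq₁
      have hx₁ge : (s:ℤ) + d ≤ x₁ := by linarith only [hx₁1]
      have hby₁ : (b:ℤ) * y₁ = p.eval ((s:ℤ)+d) - a * x₁ := by linarith only [heq₁]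
      have hx₁0 : (0:ℤ) < x₁ := by linarith only [hx₁ge, hsnn, hdZ]
      have hx₁cast : ((x₁.toNat : ℕ) : ℤ) = x₁ := Int.toNat_of_nonneg hx₁0.le
      have hx₁lt : x₁ < (b:ℤ) * s := by
        have h5 : (s:ℤ) ≤ ((b:ℤ)-1) * s := le_mul_of_one_le_left hsnn (by linarith only [habZ, haZ])
        linarith only [hx₁2, h5, hs_dbbZ, hdbb_nn, hNnn, hdZ]
      have hφx₁ : φ x₁.toNat = φ (s+d) := by
        refine (colour' (s+d) x₁.toNat (by omega) hsd_dvd (by rw [hx₁cast]; exact hdx₁)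
          (by omega) ?_).symm
        intro k hk h1 h2
        have hks : s < k := by omega
        have hbk := noswright k hk hks
        have hbksZ : ((b:ℕ):ℤ) * s ≤ (k:ℤ) := by exact_mod_cast hbk
        have hkx₁ : (k:ℤ) < x₁ := by
          have h4 : (k:ℤ) < (x₁.toNat : ℤ) := by exact_mod_cast h2
          omega
        linarith only [hx₁lt, hbksZ, hkx₁]
      have hay₁ : (a:ℤ)*x₁ ≤ (a:ℤ)*((s:ℤ) + d - 1 + d*b) :=
        mul_le_mul_of_nonneg_left (by linarith only [hx₁2]) haZ.le
      have hay₁' : (a:ℤ)*((s:ℤ)+d) ≤ (a:ℤ)*x₁ := mul_le_mul_of_nonneg_left hx₁ge haZ.le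
      have hy₁N : (N:ℤ) < y₁ := by
        have h3 : (b:ℤ)*((N:ℤ)+1) ≤ (b:ℤ)*y₁ := by linarith only [hT2, hby₁, hay₁, haZ]
        have := le_of_mul_le_mul_left h3 hbZ
        linarith only [this]
      have hy₁0 : (0:ℤ) < y₁ := by linarith only [hy₁N, hNnn]
      have hy₁cast : ((y₁.toNat : ℕ) : ℤ) = y₁ := Int.toNat_of_nonneg hy₁0.le
      by_cases hc₁ : φ y₁.toNat = φ (s+d)
      · refine ⟨x₁.toNat, y₁.toNat, s+d, by omega, by omega, by omega,
          hφx₁.trans hc₁.symm, hφx₁, ?_, by omega⟩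
        rw [hx₁cast, hy₁cast, hsdcast]; exact heq₁
      have hcy₀ : φ y₀.toNat = φ (s+d) := fin2resolve (φ s) (φ (s+d)) _ hsφ hc₀
      have hcy₁ : φ y₁.toNat = φ s := fin2resolve (φ (s+d)) (φ s) _ (Ne.symm hsφ) hc₁
      have hyy_ne : φ y₀.toNat ≠ φ y₁.toNat := by rw [hcy₀, hcy₁]; exact Ne.symm hsφ
      have hsNZ : ((N:ℕ):ℤ) < (s:ℤ) := by exact_mod_cast hsN
      have finishA : ∀ σ : ℕ, Switch σ → (N:ℤ) < (σ:ℤ) →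
          ((p.eval (s:ℤ) - a*s ≤ (b:ℤ)*σ ∧ (b:ℤ)*σ + b ≤ p.eval ((s:ℤ)+d) - a*((s:ℤ)+d)) ∨
           (p.eval ((s:ℤ)+d) - a*((s:ℤ)+d-1+d*b) ≤ (b:ℤ)*σ ∧
             (b:ℤ)*σ + b ≤ p.eval (s:ℤ) - a*((s:ℤ)-d*b+1))) →
          ∃ x y z : ℕ, 0 < x ∧ 0 < y ∧ 0 < z ∧ φ x = φ y ∧ φ x = φ z ∧
            (a:ℤ) * x + (b:ℤ) * y = p.eval (z:ℤ) ∧ B < z := by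
        intro σ hσsw hσN hσb
        have habZ' : (0:ℤ) < (a:ℤ)+b := by positivity
        have hbab_nn : (0:ℤ) ≤ (b:ℤ)*((a:ℤ)+b) := by positivity
        have hMbig₀ : (d:ℤ) * (((a:ℤ)+b) * b) ≤ p.eval (s:ℤ) - ((a:ℤ)+b)*s := by
          linarith only [hT3]
        have hMbig₁ : (d:ℤ) * (((a:ℤ)+b) * b) ≤ p.eval (((s+d:ℕ)):ℤ) - ((a:ℤ)+b)*((s+d:ℕ):ℤ) := by
          rw [hsdcast]; linarith only [hT4]
        obtain ⟨X₀, Y₀, hXYeq₀, hXY₀le, hXY₀lt, hXz₀, hdX₀, hdY₀⟩ := cross s hsdvd hMbig₀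
        obtain ⟨X₁, Y₁, hXYeq₁, hXY₁le, hXY₁lt, hXz₁, hdX₁, hdY₁⟩ := cross (s+d) hsd_dvd hMbig₁
        rw [hsdcast] at hXYeq₁ hXz₁
        have hbY₀ : (b:ℤ)*(Y₀-X₀) ≤ (b:ℤ)*((d:ℤ)*((a:ℤ)+b) - 1) :=
          mul_le_mul_of_nonneg_left (by linarith only [hXY₀lt]) hbZ.le
        have haY₀ : (a:ℤ)*(Y₀-X₀) ≤ (a:ℤ)*((d:ℤ)*((a:ℤ)+b) - 1) :=
          mul_le_mul_of_nonneg_left (by linarith only [hXY₀lt]) haZ.le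
        have hbY₁ : (b:ℤ)*(Y₁-X₁) ≤ (b:ℤ)*((d:ℤ)*((a:ℤ)+b) - 1) :=
          mul_le_mul_of_nonneg_left (by linarith only [hXY₁lt]) hbZ.le
        have haY₁ : (a:ℤ)*(Y₁-X₁) ≤ (a:ℤ)*((d:ℤ)*((a:ℤ)+b) - 1) :=
          mul_le_mul_of_nonneg_left (by linarith only [hXY₁lt]) haZ.le
        have he₀ : ((a:ℤ)+b)*X₀ = p.eval (s:ℤ) - (b:ℤ)*(Y₀-X₀) := by linarith only [hXYeq₀]
        have hf₀ : ((a:ℤ)+b)*Y₀ = p.eval (s:ℤ) + (a:ℤ)*(Y₀-X₀) := by linarith only [hXYeq₀]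
        have he₁ : ((a:ℤ)+b)*X₁ = p.eval ((s:ℤ)+d) - (b:ℤ)*(Y₁-X₁) := by linarith only [hXYeq₁]
        have hf₁ : ((a:ℤ)+b)*Y₁ = p.eval ((s:ℤ)+d) + (a:ℤ)*(Y₁-X₁) := by linarith only [hXYeq₁]
        have hXe₀ : p.eval (s:ℤ) - (b:ℤ)*((d:ℤ)*((a:ℤ)+b)-1) ≤ ((a:ℤ)+b)*X₀ := by
          linarith only [he₀, hbY₀]
        have hXe₁ : p.eval ((s:ℤ)+d) - (b:ℤ)*((d:ℤ)*((a:ℤ)+b)-1) ≤ ((a:ℤ)+b)*X₁ := by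
          linarith only [he₁, hbY₁]
        have pab : (0:ℤ) < (a:ℤ)*b := mul_pos haZ hbZ
        have pas : (0:ℤ) ≤ ((a:ℤ)+b)*((a:ℤ)*s) := by positivity
        have pad : (0:ℤ) ≤ ((a:ℤ)+b)*((a:ℤ)*d) := by positivity
        have padb : (0:ℤ) ≤ ((a:ℤ)+b)*((a:ℤ)*(d*b)) := by positivity
        have pbb : (0:ℤ) < ((a:ℤ)+b)*b := by positivity
        have pb3 : (0:ℤ) < (b:ℤ)*b*b := by positivity
        have paab : (0:ℤ) < ((a:ℤ)+b)*a := by positivity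
        have hY₀σ : Y₀ ≤ (σ:ℤ) := by
          by_contra hcon2
          push_neg at hcon2
          have h1 : (b:ℤ)*((a:ℤ)+b)*((σ:ℤ)+1) ≤ (b:ℤ)*((a:ℤ)+b)*Y₀ :=
            mul_le_mul_of_nonneg_left (Int.add_one_le_iff.mpr hcon2) hbab_nn
          have h2 : (b:ℤ)*(((a:ℤ)+b)*Y₀) ≤ (b:ℤ)*(p.eval (s:ℤ) + (a:ℤ)*((d:ℤ)*((a:ℤ)+b)-1)) :=
            mul_le_mul_of_nonneg_left (by linarith only [hf₀, haY₀]) hbZ.le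
          rcases hσb with ⟨hσ1, hσ2⟩ | ⟨hσ1, hσ2⟩
          · have h3 : ((a:ℤ)+b)*(p.eval (s:ℤ) - a*s) ≤ ((a:ℤ)+b)*((b:ℤ)*σ) :=
              mul_le_mul_of_nonneg_left hσ1 habZ'.le
            linarith only [h1, h2, h3, hI1, pab, pbb]
          · have h3 : ((a:ℤ)+b)*(p.eval ((s:ℤ)+d) - a*((s:ℤ)+d-1+d*b)) ≤ ((a:ℤ)+b)*((b:ℤ)*σ) :=
              mul_le_mul_of_nonneg_left hσ1 habZ'.le
            linarith only [h1, h2, h3, hI2, pab, pbb, paab]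
        have hY₁σ : Y₁ ≤ (σ:ℤ) := by
          by_contra hcon2
          push_neg at hcon2
          have h1 : (b:ℤ)*((a:ℤ)+b)*((σ:ℤ)+1) ≤ (b:ℤ)*((a:ℤ)+b)*Y₁ :=
            mul_le_mul_of_nonneg_left (Int.add_one_le_iff.mpr hcon2) hbab_nn
          have h2 : (b:ℤ)*(((a:ℤ)+b)*Y₁) ≤ (b:ℤ)*(p.eval ((s:ℤ)+d) + (a:ℤ)*((d:ℤ)*((a:ℤ)+b)-1)) :=
            mul_le_mul_of_nonneg_left (by linarith only [hf₁, haY₁]) hbZ.le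
          rcases hσb with ⟨hσ1, hσ2⟩ | ⟨hσ1, hσ2⟩
          · have h3 : ((a:ℤ)+b)*(p.eval (s:ℤ) - a*s) ≤ ((a:ℤ)+b)*((b:ℤ)*σ) :=
              mul_le_mul_of_nonneg_left hσ1 habZ'.le
            linarith only [h1, h2, h3, hI3, pab, pbb]
          · have h3 : ((a:ℤ)+b)*(p.eval ((s:ℤ)+d) - a*((s:ℤ)+d-1+d*b)) ≤ ((a:ℤ)+b)*((b:ℤ)*σ) :=
              mul_le_mul_of_nonneg_left hσ1 habZ'.le
            linarith only [h1, h2, h3, hI4, pab, pbb, paab]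
        have hσX₀ : (σ:ℤ) < (b:ℤ)*X₀ := by
          by_contra hcon2
          push_neg at hcon2
          have h1 : (b:ℤ)*((a:ℤ)+b)*((b:ℤ)*X₀) ≤ (b:ℤ)*((a:ℤ)+b)*(σ:ℤ) :=
            mul_le_mul_of_nonneg_left hcon2 hbab_nn
          have h2 : (b:ℤ)*(b:ℤ)*(p.eval (s:ℤ) - (b:ℤ)*((d:ℤ)*((a:ℤ)+b)-1)) ≤
              (b:ℤ)*(b:ℤ)*(((a:ℤ)+b)*X₀) :=
            mul_le_mul_of_nonneg_left hXe₀ (by positivity)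
          rcases hσb with ⟨hσ1, hσ2⟩ | ⟨hσ1, hσ2⟩
          · have h3 : ((a:ℤ)+b)*((b:ℤ)*σ + b) ≤ ((a:ℤ)+b)*(p.eval ((s:ℤ)+d) - a*((s:ℤ)+d)) :=
              mul_le_mul_of_nonneg_left hσ2 habZ'.le
            linarith only [h1, h2, h3, hI5, pas, pad, pbb, pb3]
          · have h3 : ((a:ℤ)+b)*((b:ℤ)*σ + b) ≤ ((a:ℤ)+b)*(p.eval (s:ℤ) - a*((s:ℤ)-d*b+1)) :=
              mul_le_mul_of_nonneg_left hσ2 habZ'.le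
            linarith only [h1, h2, h3, hI6, pas, pbb, pb3, paab]
        have hσX₁ : (σ:ℤ) < (b:ℤ)*X₁ := by
          by_contra hcon2
          push_neg at hcon2
          have h1 : (b:ℤ)*((a:ℤ)+b)*((b:ℤ)*X₁) ≤ (b:ℤ)*((a:ℤ)+b)*(σ:ℤ) :=
            mul_le_mul_of_nonneg_left hcon2 hbab_nn
          have h2 : (b:ℤ)*(b:ℤ)*(p.eval ((s:ℤ)+d) - (b:ℤ)*((d:ℤ)*((a:ℤ)+b)-1)) ≤
              (b:ℤ)*(b:ℤ)*(((a:ℤ)+b)*X₁) :=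
            mul_le_mul_of_nonneg_left hXe₁ (by positivity)
          rcases hσb with ⟨hσ1, hσ2⟩ | ⟨hσ1, hσ2⟩
          · have h3 : ((a:ℤ)+b)*((b:ℤ)*σ + b) ≤ ((a:ℤ)+b)*(p.eval ((s:ℤ)+d) - a*((s:ℤ)+d)) :=
              mul_le_mul_of_nonneg_left hσ2 habZ'.le
            linarith only [h1, h2, h3, hI7, pas, pad, pbb, pb3]
          · have h3 : ((a:ℤ)+b)*((b:ℤ)*σ + b) ≤ ((a:ℤ)+b)*(p.eval (s:ℤ) - a*((s:ℤ)-d*b+1)) :=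
              mul_le_mul_of_nonneg_left hσ2 habZ'.le
            linarith only [h1, h2, h3, hI8, pas, pbb, pb3, paab]
        have hX₀0 : (0:ℤ) < X₀ := by linarith only [hXz₀, hsNZ, hNnn]
        have hX₁0 : (0:ℤ) < X₁ := by linarith only [hXz₁, hsnn, hdZ]
        have hY₀0 : (0:ℤ) < Y₀ := by linarith only [hX₀0, hXY₀le]
        have hY₁0 : (0:ℤ) < Y₁ := by linarith only [hX₁0, hXY₁le]
        have hX₀cast : ((X₀.toNat : ℕ) : ℤ) = X₀ := Int.toNat_of_nonneg hX₀0.le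
        have hX₁cast : ((X₁.toNat : ℕ) : ℤ) = X₁ := Int.toNat_of_nonneg hX₁0.le
        have hY₀cast : ((Y₀.toNat : ℕ) : ℤ) = Y₀ := Int.toNat_of_nonneg hY₀0.le
        have hY₁cast : ((Y₁.toNat : ℕ) : ℤ) = Y₁ := Int.toNat_of_nonneg hY₁0.le
        have hX₀N : (N:ℤ) < X₀ := by linarith only [hXz₀, hsNZ]
        have hX₁N : (N:ℤ) < X₁ := by linarith only [hXz₁, hsNZ, hdZ]
        have noswXY : ∀ (U V : ℤ), (N:ℤ) < U → (σ:ℤ) < (b:ℤ)*U → V ≤ (σ:ℤ) →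
            ∀ k, Switch k → U ≤ (k:ℤ) → (k:ℤ) < V → False := by
          intro U V hUN hUσ hVσ k hk h1 h2
          have hkN : N < k := by
            have h3 : (N:ℤ) < (k:ℤ) := by linarith only [hUN, h1]
            exact_mod_cast h3
          rcases lt_or_ge k σ with hkσ | hkσ
          · have hbk := star k σ hk hσsw hkN hkσ
            have h6 : ((b*k:ℕ):ℤ) ≤ ((σ:ℕ):ℤ) := by exact_mod_cast hbk
            push_cast at h6
            have h5 : (b:ℤ)*U ≤ (b:ℤ)*k := mul_le_mul_of_nonneg_left h1 hbZ.le
            linarith only [hUσ, h5, h6]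
          · have h6 : ((σ:ℕ):ℤ) ≤ (k:ℤ) := by exact_mod_cast hkσ
            linarith only [hVσ, h2, h6]
        have hXYc₀ : φ X₀.toNat = φ Y₀.toNat := by
          refine colour' X₀.toNat Y₀.toNat (by omega) (by rw [hX₀cast]; exact hdX₀)
            (by rw [hY₀cast]; exact hdY₀) (by omega) ?_
          intro k hk h1 h2
          refine noswXY X₀ Y₀ hX₀N hσX₀ hY₀σ k hk ?_ ?_
          · have : (X₀.toNat:ℤ) ≤ (k:ℤ) := by exact_mod_cast h1
            omega
          · have : (k:ℤ) < (Y₀.toNat:ℤ) := by exact_mod_cast h2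
            omega
        have hXYc₁ : φ X₁.toNat = φ Y₁.toNat := by
          refine colour' X₁.toNat Y₁.toNat (by omega) (by rw [hX₁cast]; exact hdX₁)
            (by rw [hY₁cast]; exact hdY₁) (by omega) ?_
          intro k hk h1 h2
          refine noswXY X₁ Y₁ hX₁N hσX₁ hY₁σ k hk ?_ ?_
          · have : (X₁.toNat:ℤ) ≤ (k:ℤ) := by exact_mod_cast h1
            omega
          · have : (k:ℤ) < (Y₁.toNat:ℤ) := by exact_mod_cast h2
            omega
        have hXX : φ X₀.toNat = φ X₁.toNat := by
          rcases le_total X₀.toNat X₁.toNat with hxx | hxx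
          · refine colour' X₀.toNat X₁.toNat (by omega) (by rw [hX₀cast]; exact hdX₀)
              (by rw [hX₁cast]; exact hdX₁) hxx ?_
            intro k hk h1 h2
            refine noswXY X₀ X₁ hX₀N hσX₀ (by linarith only [hXY₁le, hY₁σ]) k hk ?_ ?_
            · have : (X₀.toNat:ℤ) ≤ (k:ℤ) := by exact_mod_cast h1
              omega
            · have : (k:ℤ) < (X₁.toNat:ℤ) := by exact_mod_cast h2
              omega
          · refine (colour' X₁.toNat X₀.toNat (by omega) (by rw [hX₁cast]; exact hdX₁)
              (by rw [hX₀cast]; exact hdX₀) hxx ?_).symm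
            intro k hk h1 h2
            refine noswXY X₁ X₀ hX₁N hσX₁ (by linarith only [hXY₀le, hY₀σ]) k hk ?_ ?_
            · have : (X₁.toNat:ℤ) ≤ (k:ℤ) := by exact_mod_cast h1
              omega
            · have : (k:ℤ) < (X₀.toNat:ℤ) := by exact_mod_cast h2
              omega
        rcases fin2cases (φ s) (φ (s+d)) (φ X₀.toNat) hsφ with hδ | hδ
        · refine ⟨X₀.toNat, Y₀.toNat, s, by omega, by omega, hs0, hXYc₀, hδ, ?_, hsB⟩
          rw [hX₀cast, hY₀cast]; exact hXYeq₀
        · refine ⟨X₁.toNat, Y₁.toNat, s+d, by omega, by omega, by omega,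
            hXYc₁, hXX.symm.trans hδ, ?_, by omega⟩
          rw [hX₁cast, hY₁cast, hsdcast]; exact hXYeq₁
      rcases le_total y₀.toNat y₁.toNat with hyy | hyy
      · obtain ⟨σ, hσsw, hσ1, hσ2⟩ := switch_between y₀.toNat y₁.toNat (by omega)
          (by rw [hy₀cast]; exact hdy₀) (by rw [hy₁cast]; exact hdy₁) hyy hyy_ne
        have hσy₀ : y₀ ≤ (σ:ℤ) := by
          have : (y₀.toNat:ℤ) ≤ ((σ:ℕ):ℤ) := by exact_mod_cast hσ1
          omega
        have hσy₁ : ((σ:ℕ):ℤ) < y₁ := by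
          have : ((σ:ℕ):ℤ) < (y₁.toNat:ℤ) := by exact_mod_cast hσ2
          omega
        refine finishA σ hσsw (by linarith only [hσy₀, hy₀N]) (Or.inl ⟨?_, ?_⟩)
        · have h5 : (b:ℤ)*y₀ ≤ (b:ℤ)*σ := mul_le_mul_of_nonneg_left hσy₀ hbZ.le
          linarith only [h5, hby₀, hay₀]
        · have h5 : (b:ℤ)*((σ:ℤ)+1) ≤ (b:ℤ)*y₁ :=
            mul_le_mul_of_nonneg_left (Int.add_one_le_iff.mpr hσy₁) hbZ.le
          linarith only [h5, hby₁, hay₁']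
      · obtain ⟨σ, hσsw, hσ1, hσ2⟩ := switch_between y₁.toNat y₀.toNat (by omega)
          (by rw [hy₁cast]; exact hdy₁) (by rw [hy₀cast]; exact hdy₀) hyy hyy_ne.symm
        have hσy₁ : y₁ ≤ (σ:ℤ) := by
          have : (y₁.toNat:ℤ) ≤ ((σ:ℕ):ℤ) := by exact_mod_cast hσ1
          omega
        have hσy₀ : ((σ:ℕ):ℤ) < y₀ := by
          have : ((σ:ℕ):ℤ) < (y₀.toNat:ℤ) := by exact_mod_cast hσ2
          omega
        refine finishA σ hσsw (by linarith only [hσy₁, hy₁N]) (Or.inr ⟨?_, ?_⟩)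
        · have h5 : (b:ℤ)*y₁ ≤ (b:ℤ)*σ := mul_le_mul_of_nonneg_left hσy₁ hbZ.le
          linarith only [h5, hby₁, hay₁]
        · have h5 : (b:ℤ)*((σ:ℤ)+1) ≤ (b:ℤ)*y₀ :=
            mul_le_mul_of_nonneg_left (Int.add_one_le_iff.mpr hσy₀) hbZ.le
          linarith only [h5, hby₀, hay₀']
    · -- switches are bounded: colour is eventually constant on the progression
      push_neg at hUB
      obtain ⟨R₀, hR₀⟩ := hUB
      obtain ⟨SB, hSB⟩ := mkInst 1 one_pos 0 (-((a:ℤ)+b)) (-((a:ℤ)*b*d + (b:ℤ)*R₀ + b))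
      have hR₀' : ∀ s, Switch s → s ≤ R₀ := hR₀
      set G : ℕ := B + R₀ + SB + 1 with hG
      set z : ℕ := (t % d).toNat + d * G with hz
      have h0 : (((t % d).toNat : ℕ) : ℤ) = t % d :=
        Int.toNat_of_nonneg (Int.emod_nonneg t (by exact_mod_cast hd.ne'))
      have htdm : (d:ℤ) * (t / d) + t % d = t := Int.mul_ediv_add_emod t d
      have hzt : (z:ℤ) - t = (d:ℤ) * ((G:ℤ) - t / d) := by
        rw [hz]; push_cast; rw [h0]; linear_combination htdm
      have hzdvd : (d:ℤ) ∣ (z:ℤ) - t := ⟨(G:ℤ) - t / d, hzt⟩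
      have hdGz : d * G ≤ z := by rw [hz]; exact Nat.le_add_left _ _
      have hGz : G ≤ z := le_trans (Nat.le_mul_of_pos_left G hd) hdGz
      have hzB : B < z := lt_of_lt_of_le (by omega) hGz
      have hzR₀ : R₀ < z := lt_of_lt_of_le (by omega) hGz
      have hP := hSB z (le_trans (by omega) hGz)
      simp only [zero_mul, one_mul, zero_add, neg_mul] at hP
      obtain ⟨x, y, heq, hx1, hx2, hdx, hdy⟩ := sol z hzdvd ((z:ℤ) - 1)
      have hby : (b:ℤ) * y = p.eval (z:ℤ) - a * x := by linarith [heq]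
      have hxz : (z:ℤ) ≤ x := by linarith
      have hyz : (z:ℤ) ≤ y := by
        have h2 : (a:ℤ)*x ≤ (a:ℤ)*((z:ℤ) - 1 + d*b) := mul_le_mul_of_nonneg_left hx2 haZ.le
        have hR0nn : (0:ℤ) ≤ (b:ℤ)*R₀ := by positivity
        have h1 : (b:ℤ) * z ≤ (b:ℤ) * y := by nlinarith [hP, hby, h2, hR0nn]
        exact le_of_mul_le_mul_left h1 hbZ
      have hx0 : (0:ℤ) ≤ x := by
        have : (0:ℤ) ≤ z := by positivity
        linarith
      have hy0 : (0:ℤ) ≤ y := by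
        have : (0:ℤ) ≤ z := by positivity
        linarith
      have hxcast : ((x.toNat : ℕ) : ℤ) = x := Int.toNat_of_nonneg hx0
      have hycast : ((y.toNat : ℕ) : ℤ) = y := Int.toNat_of_nonneg hy0
      have hznn : 0 < z := lt_of_lt_of_le (by omega) hGz
      have hnosw : ∀ k, Switch k → z ≤ k → False := fun k hk h1 =>
        absurd (hR₀' k hk) (by omega)
      have hφx : φ x.toNat = φ z := by
        refine (colour' z x.toNat hznn hzdvd (by rw [hxcast]; exact hdx)
          (by exact_mod_cast hxcast ▸ hxz) (fun k hk h1 h2 => hnosw k hk h1)).symm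
      have hφy : φ y.toNat = φ z := by
        refine (colour' z y.toNat hznn hzdvd (by rw [hycast]; exact hdy)
          (by exact_mod_cast hycast ▸ hyz) (fun k hk h1 h2 => hnosw k hk h1)).symm
      refine ⟨x.toNat, y.toNat, z, ?_, ?_, hznn, hφx.trans hφy.symm, hφx, ?_, hzB⟩
      · have : (0:ℤ) < x := lt_of_lt_of_le (by exact_mod_cast hznn) hxz
        omega
      · have : (0:ℤ) < y := lt_of_lt_of_le (by exact_mod_cast hznn) hyz
        omega
      · rw [hxcast, hycast]; exact heq
  have himg := (hfin.image (fun w : ℕ × ℕ × ℕ => w.2.2)).bddAbove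
  obtain ⟨M0, hM0⟩ := himg
  obtain ⟨x, y, z, h1, h2, h3, h4, h5, h6, h7⟩ := key M0
  have hmem : ((x, y, z) : ℕ × ℕ × ℕ) ∈ {w : ℕ × ℕ × ℕ | 0 < w.1 ∧ 0 < w.2.1 ∧ 0 < w.2.2 ∧
      φ w.1 = φ w.2.1 ∧ φ w.1 = φ w.2.2 ∧
      (a : ℤ) * w.1 + (b : ℤ) * w.2.1 = p.eval (w.2.2 : ℤ)} := ⟨h1, h2, h3, h4, h5, h6⟩
  have hzM : z ≤ M0 := hM0 (Set.mem_image_of_mem _ hmem)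
  omega

/-- **Claim 1.** Let `p ∈ ℤ[z]` have degree at least 2 and positive leading
coefficient, let `a ≠ b` be positive coprime integers and `U = max(a,b)`. Let `d` be a positive
integer and `t` an integer with `(a+b)·t ≡ p(t) (mod d)`, and let `φ` be a 2-colouring of the
positive integers admitting only finitely many monochromatic solutions of `a·x + b·y = p(z)`.
Calling a positive integer `k ≡ t (mod d)` a `d`-switch when `φ(k) ≠ φ(k+d)`, there are
infinitely many pairs of neighbouring `d`-switches `k₁ < k₂` (no `d`-switch strictly between
them) with `k₂ < U·k₁`. -/
theorem stmt_15 (p : Polynomial ℤ) (hdeg : 2 ≤ p.natDegree) (hlead : 0 < p.leadingCoeff)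
    (a b : ℕ) (ha : 0 < a) (hb : 0 < b) (hne : a ≠ b) (hab : Nat.gcd a b = 1)
    (U : ℕ) (hU : U = max a b)
    (d : ℕ) (hd : 0 < d) (t : ℤ) (ht : (d : ℤ) ∣ p.eval t - ((a : ℤ) + b) * t)
    (φ : ℕ → Fin 2)
    (hfin : {w : ℕ × ℕ × ℕ | 0 < w.1 ∧ 0 < w.2.1 ∧ 0 < w.2.2 ∧
      φ w.1 = φ w.2.1 ∧ φ w.1 = φ w.2.2 ∧
      (a : ℤ) * w.1 + (b : ℤ) * w.2.1 = p.eval (w.2.2 : ℤ)}.Finite)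
    (Switch : ℕ → Prop)
    (hSwitch : ∀ k : ℕ, Switch k ↔
      0 < k ∧ (d : ℤ) ∣ (k : ℤ) - t ∧ φ k ≠ φ (k + d)) :
    ∀ N : ℕ, ∃ k₁ k₂ : ℕ, N < k₁ ∧ k₁ < k₂ ∧ Switch k₁ ∧ Switch k₂ ∧
      (∀ k₃ : ℕ, Switch k₃ → ¬ (k₁ < k₃ ∧ k₃ < k₂)) ∧ k₂ < U * k₁ := by
  rcases hne.lt_or_gt with hlt | hlt
  · have hU' : U = b := by rw [hU]; exact max_eq_right hlt.le
    intro N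
    obtain ⟨k₁, k₂, h1, h2, h3, h4, h5, h6⟩ :=
      stmt15_aux p hdeg hlead a b ha hlt hab d hd t ht φ hfin Switch hSwitch N
    exact ⟨k₁, k₂, h1, h2, h3, h4, h5, by rw [hU']; exact h6⟩
  · have hU' : U = a := by rw [hU]; exact max_eq_left hlt.le
    have hab' : Nat.gcd b a = 1 := by rwa [Nat.gcd_comm]
    have ht' : (d : ℤ) ∣ p.eval t - ((b : ℤ) + a) * t := by
      have he : ((b:ℤ) + a) * t = ((a:ℤ) + b) * t := by ring
      rw [he]; exact ht
    have hfin' : {w : ℕ × ℕ × ℕ | 0 < w.1 ∧ 0 < w.2.1 ∧ 0 < w.2.2 ∧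
        φ w.1 = φ w.2.1 ∧ φ w.1 = φ w.2.2 ∧
        (b : ℤ) * w.1 + (a : ℤ) * w.2.1 = p.eval (w.2.2 : ℤ)}.Finite := by
      have hswap : Function.Injective (fun w : ℕ × ℕ × ℕ => (w.2.1, w.1, w.2.2)) := by
        rintro ⟨x1, y1, z1⟩ ⟨x2, y2, z2⟩ hxy
        simp only [Prod.mk.injEq] at hxy
        simp [hxy.1, hxy.2.1, hxy.2.2]
      refine Set.Finite.subset (Set.Finite.preimage hswap.injOn hfin) ?_
      rintro ⟨x, y, z⟩ ⟨h1, h2, h3, h4, h5, h6⟩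
      refine ⟨h2, h1, h3, h4.symm, h4.symm.trans h5, ?_⟩
      linarith only [h6]
    intro N
    obtain ⟨k₁, k₂, h1, h2, h3, h4, h5, h6⟩ :=
      stmt15_aux p hdeg hlead b a hb hlt hab' d hd t ht' φ hfin' Switch hSwitch N
    exact ⟨k₁, k₂, h1, h2, h3, h4, h5, by rw [hU']; exact h6⟩
end
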